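/- arXiv:2010.05088 — 4 statements merged into one kernel-verified Lean document; each statement's English description precedes it below -/
import Mathlib

section
/- For every ε > 0, m > 0, and each fixed λ ∈ ℤ₊, the series Σ_{μ=0}^∞ b₁(λ,μ,m,ε) converges to (−1)^(λ+1)·(1+√(m²ε²+1))/(mε), and the series Σ_{μ=0}^∞ b₂(λ,μ,m,ε) converges to (−1)^(λ+1). -/
noncomputable section

/-- The `i`-th move of a checker path encoded as `f : Fin n → Bool`
(`true` = upwards-right move `(ε,ε)`, `false` = upwards-left move `(−ε,ε)`);
out-of-range indices default to `true`. -/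
def fcStep {n : ℕ} (f : Fin n → Bool) (i : ℕ) : Bool :=
  if h : i < n then f ⟨i, h⟩ else true

/-- The number of turns of the checker path `f`. -/
def fcTurns {n : ℕ} (f : Fin n → Bool) : ℕ :=
  ((Finset.range (n - 1)).filter fun i => fcStep f i ≠ fcStep f (i + 1)).card

/-- The position (in units of `ε`) of the checker path `f` after `i` moves,
starting from the origin. -/
def fcPos {n : ℕ} (f : Fin n → Bool) (i : ℕ) : ℤ :=
  ∑ j ∈ Finset.range i, (if fcStep f j then (1 : ℤ) else -1)

/-- Checker paths from `(0,0)` to `(εx, εn)` whose first step is to `(ε,ε)`. -/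
def fcPaths (n : ℕ) (x : ℤ) : Finset (Fin n → Bool) :=
  Finset.univ.filter fun f =>
    (∀ i : Fin n, (i : ℕ) = 0 → f i = true) ∧ fcPos f n = x

/-- The amplitude `a(εx, εn, m, ε)`. -/
def fcAmp (m ε : ℝ) (x : ℤ) (n : ℕ) : ℂ :=
  (((1 + m ^ 2 * ε ^ 2) ^ ((1 - (n : ℝ)) / 2) : ℝ) : ℂ) * Complex.I *
    ∑ f ∈ fcPaths n x, (-Complex.I * (m * ε)) ^ fcTurns f

/-- The probability `P(εx, εn, m, ε)` to find the electron at `(εx, εn)`. -/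
def fcP (m ε : ℝ) (x : ℤ) (n : ℕ) : ℝ := ‖fcAmp m ε x n‖ ^ 2

/-- `b(λ,μ,m,ε) := a(ε(λ−μ), ε(λ+μ), m, ε)`. -/
def fcB (m ε : ℝ) (lam mu : ℕ) : ℂ := fcAmp m ε ((lam : ℤ) - (mu : ℤ)) (lam + mu)

open Finset

lemma fcStep_snoc_lt {n : ℕ} (f : Fin n → Bool) (b : Bool) {i : ℕ} (h : i < n) :
    fcStep (Fin.snoc f b) i = fcStep f i := by
  simp only [fcStep, dif_pos h, dif_pos (Nat.lt_succ_of_lt h)]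
  exact Fin.snoc_castSucc (α := fun _ => Bool) b f ⟨i, h⟩

lemma fcStep_snoc_last {n : ℕ} (f : Fin n → Bool) (b : Bool) :
    fcStep (Fin.snoc f b) n = b := by
  simp only [fcStep, dif_pos (Nat.lt_succ_self n)]
  exact Fin.snoc_last (α := fun _ => Bool) b f

lemma fcPos_snoc {n : ℕ} (f : Fin n → Bool) (b : Bool) {i : ℕ} (h : i ≤ n) :
    fcPos (Fin.snoc f b) i = fcPos f i := by
  unfold fcPos
  refine Finset.sum_congr rfl fun j hj => ?_
  rw [fcStep_snoc_lt f b (lt_of_lt_of_le (mem_range.mp hj) h)]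

lemma fcPos_snoc_succ {n : ℕ} (f : Fin n → Bool) (b : Bool) :
    fcPos (Fin.snoc f b) (n + 1) = fcPos f n + (if b then 1 else -1) := by
  unfold fcPos
  rw [Finset.sum_range_succ, fcStep_snoc_last]
  congr 1
  · exact Finset.sum_congr rfl fun j hj => by
      rw [fcStep_snoc_lt f b (mem_range.mp hj)]

lemma fcTurns_snoc {n : ℕ} (hn : 1 ≤ n) (f : Fin n → Bool) (b : Bool) :
    fcTurns (Fin.snoc f b) = fcTurns f + (if fcStep f (n - 1) = b then 0 else 1) := by
  unfold fcTurns
  obtain ⟨m, rfl⟩ := Nat.exists_eq_add_of_le hn  -- n = 1 + m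
  have hn1 : 1 + m + 1 - 1 = m + 1 := by omega
  have hn2 : 1 + m - 1 = m := by omega
  rw [hn1, hn2, Finset.range_add_one, Finset.filter_insert]
  have key : ∀ i ∈ Finset.range m, (fcStep (Fin.snoc f b) i ≠ fcStep (Fin.snoc f b) (i+1)) =
      (fcStep f i ≠ fcStep f (i+1)) := by
    intro i hi
    have hi' := mem_range.mp hi
    rw [fcStep_snoc_lt f b (by omega), fcStep_snoc_lt f b (by omega)]
  rw [Finset.filter_congr (fun i hi => by rw [key i hi])]
  have hlast : fcStep (Fin.snoc f b) m = fcStep f m := fcStep_snoc_lt f b (by omega)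
  have hlast2 : fcStep (Fin.snoc f b) (m + 1) = b := by
    have : m + 1 = 1 + m := by omega
    rw [this, fcStep_snoc_last]
  have hmem : m ∉ Finset.range m := by simp
  rw [hlast, hlast2]
  by_cases hb : fcStep f m = b
  · rw [if_pos hb, if_neg (by simp [hb]), add_zero]
  · rw [if_neg hb, if_pos hb,
      Finset.card_insert_of_notMem (fun h => hmem (Finset.mem_of_mem_filter m h))]

def snocEmb (n : ℕ) (b : Bool) : (Fin n → Bool) ↪ (Fin (n + 1) → Bool) :=
  ⟨fun f => Fin.snoc f b, fun f g h => by
    have := congrArg Fin.init h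
    rwa [Fin.init_snoc, Fin.init_snoc] at this⟩

lemma firstCond_snoc {n : ℕ} (hn : 1 ≤ n) (f : Fin n → Bool) (b : Bool) :
    (∀ i : Fin (n + 1), (i : ℕ) = 0 → (Fin.snoc f b : Fin (n+1) → Bool) i = true) ↔
      (∀ i : Fin n, (i : ℕ) = 0 → f i = true) := by
  constructor
  · intro h i hi
    have := h (Fin.castSucc i) (by simpa)
    rwa [Fin.snoc_castSucc] at this
  · intro h i hi
    have : i = Fin.castSucc ⟨0, by omega⟩ := Fin.ext (by simp [hi])
    rw [this, Fin.snoc_castSucc]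
    exact h _ rfl

lemma fcPaths_succ {n : ℕ} (hn : 1 ≤ n) (x : ℤ) :
    fcPaths (n + 1) x =
      (fcPaths n (x - 1)).map (snocEmb n true) ∪ (fcPaths n (x + 1)).map (snocEmb n false) := by
  ext f
  simp only [fcPaths, Finset.mem_union, Finset.mem_map, Finset.mem_filter, Finset.mem_univ,
    true_and, snocEmb, Function.Embedding.coeFn_mk]
  constructor
  · rintro ⟨h1, h2⟩
    have hf : f = Fin.snoc (Fin.init f) (f (Fin.last n)) := (Fin.snoc_init_self f).symm
    cases hb : f (Fin.last n) <;> rw [hb] at hf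
    · right
      refine ⟨Fin.init f, ⟨?_, ?_⟩, ?_⟩
      · rw [← firstCond_snoc hn (Fin.init f) false]
        intro i hi
        rw [← hf]
        exact h1 i hi
      · have := h2
        rw [hf, fcPos_snoc_succ] at this
        simp at this
        omega
      · exact hf.symm
    · left
      refine ⟨Fin.init f, ⟨?_, ?_⟩, ?_⟩
      · rw [← firstCond_snoc hn (Fin.init f) true]
        intro i hi
        rw [← hf]
        exact h1 i hi
      · have := h2
        rw [hf, fcPos_snoc_succ] at this
        simp at this
        omega
      · exact hf.symm
  · rintro (⟨g, ⟨h1, h2⟩, rfl⟩ | ⟨g, ⟨h1, h2⟩, rfl⟩)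
    · exact ⟨(firstCond_snoc hn g true).mpr h1, by show fcPos (Fin.snoc (α := fun _ => Bool) g true) (n + 1) = x; rw [fcPos_snoc_succ]; simp [h2]⟩
    · exact ⟨(firstCond_snoc hn g false).mpr h1, by show fcPos (Fin.snoc (α := fun _ => Bool) g false) (n + 1) = x; rw [fcPos_snoc_succ]; simp [h2]⟩

lemma fcPaths_disj {n : ℕ} (x : ℤ) :
    Disjoint ((fcPaths n (x - 1)).map (snocEmb n true))
      ((fcPaths n (x + 1)).map (snocEmb n false)) := by
  rw [Finset.disjoint_left]
  rintro f hf1 hf2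
  simp only [Finset.mem_map, snocEmb, Function.Embedding.coeFn_mk] at hf1 hf2
  obtain ⟨g, -, rfl⟩ := hf1
  obtain ⟨g', -, h⟩ := hf2
  have := congrArg (fun f => f (Fin.last n)) h
  change Fin.snoc (α := fun _ => Bool) g' false (Fin.last n) = Fin.snoc (α := fun _ => Bool) g true (Fin.last n) at this
  simp only [Fin.snoc_last] at this
  exact Bool.false_ne_true this

lemma sum_fcPaths_succ {n : ℕ} (hn : 1 ≤ n) (x : ℤ) (G : (Fin (n + 1) → Bool) → ℂ) :
    ∑ f ∈ fcPaths (n + 1) x, G f =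
      (∑ f ∈ fcPaths n (x - 1), G (Fin.snoc f true)) +
        ∑ f ∈ fcPaths n (x + 1), G (Fin.snoc f false) := by
  rw [fcPaths_succ hn, Finset.sum_union (fcPaths_disj x), Finset.sum_map, Finset.sum_map]
  rfl

def fcSS (n : ℕ) (x : ℤ) (e : Bool) (z : ℂ) : ℂ :=
  ∑ f ∈ fcPaths n x, if fcStep f (n - 1) = e then z ^ fcTurns f else 0

lemma fcSS_add (n : ℕ) (x : ℤ) (z : ℂ) :
    fcSS n x true z + fcSS n x false z = ∑ f ∈ fcPaths n x, z ^ fcTurns f := by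
  rw [fcSS, fcSS, ← Finset.sum_add_distrib]
  refine Finset.sum_congr rfl fun f _ => ?_
  cases h : fcStep f (n - 1) <;> simp [h]

lemma fcPaths_empty_hi {n : ℕ} {x : ℤ} (h : (n : ℤ) < x) : fcPaths n x = ∅ := by
  rw [Finset.eq_empty_iff_forall_notMem]
  intro f hf
  simp only [fcPaths, Finset.mem_filter] at hf
  have : fcPos f n ≤ (n : ℤ) := by
    calc fcPos f n ≤ ∑ j ∈ Finset.range n, (1 : ℤ) :=
      Finset.sum_le_sum fun j _ => by split <;> omega
    _ = n := by simp
  omega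

lemma fcPaths_empty_lo {n : ℕ} {x : ℤ} (hn : 1 ≤ n) (h : x < 2 - (n : ℤ)) :
    fcPaths n x = ∅ := by
  rw [Finset.eq_empty_iff_forall_notMem]
  intro f hf
  simp only [fcPaths, Finset.mem_filter] at hf
  obtain ⟨-, h1, h2⟩ := hf
  obtain ⟨m, rfl⟩ := Nat.exists_eq_add_of_le hn
  have hstep0 : fcStep f 0 = true := by
    rw [fcStep, dif_pos (by omega)]
    exact h1 _ rfl
  have hrw : 1 + m = m + 1 := by omega
  have : fcPos f (1 + m) = 1 + ∑ j ∈ Finset.range m, (if fcStep f (j + 1) then (1:ℤ) else -1) := by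
    rw [fcPos, show Finset.range (1+m) = Finset.range (m+1) from by rw [hrw], Finset.sum_range_succ']
    simp [hstep0, add_comm]
  have hb : ∑ j ∈ Finset.range m, (if fcStep f (j + 1) then (1:ℤ) else -1) ≥
      ∑ j ∈ Finset.range m, (-1 : ℤ) :=
    Finset.sum_le_sum fun j _ => by split <;> omega
  rw [Finset.sum_const, Finset.card_range, nsmul_eq_mul, mul_neg_one] at hb
  omega

lemma fcSS_rec_true {n : ℕ} (hn : 1 ≤ n) (x : ℤ) (z : ℂ) :
    fcSS (n + 1) x true z = fcSS n (x - 1) true z + z * fcSS n (x - 1) false z := by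
  rw [fcSS, show n + 1 - 1 = n from rfl,
    sum_fcPaths_succ hn x (fun f => if fcStep f n = true then z ^ fcTurns f else 0)]
  have h2 : ∀ f ∈ fcPaths n (x + 1),
      (if fcStep ((Fin.snoc f false : Fin (n+1) → Bool)) n = true
        then z ^ fcTurns (Fin.snoc f false : Fin (n+1) → Bool) else 0) = 0 := by
    intro f _
    rw [fcStep_snoc_last]
    simp
  rw [Finset.sum_congr rfl h2, Finset.sum_const_zero, add_zero, fcSS, fcSS, Finset.mul_sum,
    ← Finset.sum_add_distrib]
  refine Finset.sum_congr rfl fun f _ => ?_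
  rw [fcStep_snoc_last, if_pos rfl, fcTurns_snoc hn]
  cases h : fcStep f (n - 1) <;> simp [h, pow_succ] <;> ring

lemma fcSS_rec_false {n : ℕ} (hn : 1 ≤ n) (x : ℤ) (z : ℂ) :
    fcSS (n + 1) x false z = z * fcSS n (x + 1) true z + fcSS n (x + 1) false z := by
  rw [fcSS, show n + 1 - 1 = n from rfl,
    sum_fcPaths_succ hn x (fun f => if fcStep f n = false then z ^ fcTurns f else 0)]
  have h2 : ∀ f ∈ fcPaths n (x - 1),
      (if fcStep ((Fin.snoc f true : Fin (n+1) → Bool)) n = false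
        then z ^ fcTurns (Fin.snoc f true : Fin (n+1) → Bool) else 0) = 0 := by
    intro f _
    rw [fcStep_snoc_last]
    simp
  rw [Finset.sum_congr rfl h2, Finset.sum_const_zero, zero_add, fcSS, fcSS, Finset.mul_sum,
    ← Finset.sum_add_distrib]
  refine Finset.sum_congr rfl fun f _ => ?_
  rw [fcStep_snoc_last, if_pos rfl, fcTurns_snoc hn]
  cases h : fcStep f (n - 1) <;> simp [h, pow_succ] <;> ring

lemma fcPaths_one : fcPaths 1 1 = {fun _ => true} := by
  ext f
  simp only [fcPaths, Finset.mem_filter, Finset.mem_univ, true_and, Finset.mem_singleton]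
  constructor
  · rintro ⟨h1, -⟩
    funext i
    have : i = ⟨0, by omega⟩ := Fin.ext (by omega)
    rw [this]
    exact h1 _ rfl
  · rintro rfl
    refine ⟨fun i _ => rfl, ?_⟩
    simp [fcPos, fcStep]

lemma fcSS_one_true (z : ℂ) : fcSS 1 1 true z = 1 := by
  rw [fcSS, fcPaths_one, Finset.sum_singleton]
  rw [if_pos (by rw [fcStep]; simp)]
  simp [fcTurns]

lemma fcSS_one_false (z : ℂ) : fcSS 1 1 false z = 0 := by
  rw [fcSS, fcPaths_one, Finset.sum_singleton]
  rw [if_neg (by rw [fcStep]; simp)]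


noncomputable def gR (lam mu : ℕ) (z : ℂ) : ℂ :=
  if mu = 0 then 1
  else ∑ k ∈ Finset.range lam, ((lam - 1).choose (k + 1) : ℂ) * ((mu - 1).choose k : ℂ) * z ^ (2 * k + 2)

noncomputable def gL (lam mu : ℕ) (z : ℂ) : ℂ :=
  if mu = 0 then 0
  else ∑ k ∈ Finset.range lam, ((lam - 1).choose k : ℂ) * ((mu - 1).choose k : ℂ) * z ^ (2 * k + 1)

lemma gR_rec (l m : ℕ) (z : ℂ) :
    gR (l + 2) (m + 1) z = gR (l + 1) (m + 1) z + z * gL (l + 1) (m + 1) z := by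
  simp only [gR, gL, if_neg (Nat.succ_ne_zero m), Nat.succ_sub_one]
  rw [Finset.sum_range_succ, Nat.choose_succ_self]
  rw [Finset.mul_sum, ← Finset.sum_add_distrib]
  simp only [Nat.cast_zero, zero_mul, mul_zero, add_zero]
  refine Finset.sum_congr rfl fun k hk => ?_
  rw [Nat.choose_succ_succ l k]
  push_cast
  ring

lemma gL_rec (l m : ℕ) (z : ℂ) :
    gL (l + 1) (m + 1) z = z * gR (l + 1) m z + gL (l + 1) m z := by
  have e1 : ∀ (c : ℕ → ℂ), ∑ k ∈ range (l + 1), c k = ∑ k ∈ range l, c (k + 1) + c 0 :=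
    fun c => Finset.sum_range_succ' c l
  cases m with
  | zero =>
    simp only [gL, gR, if_neg (Nat.succ_ne_zero 0), if_pos rfl, Nat.succ_sub_one, mul_one, add_zero]
    rw [e1 (fun k => ((l.choose k : ℂ)) * ((Nat.choose 0 k : ℂ)) * z ^ (2 * k + 1))]
    simp
  | succ m =>
    simp only [gL, gR, if_neg (Nat.succ_ne_zero _), Nat.succ_sub_one]
    rw [e1 (fun k => ((l.choose k : ℂ)) * (((m + 1).choose k : ℂ)) * z ^ (2 * k + 1))]
    rw [Finset.sum_range_succ (fun k => ((l.choose (k + 1) : ℂ)) * ((m.choose k : ℂ)) * z ^ (2 * k + 2)) l]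
    rw [e1 (fun k => ((l.choose k : ℂ)) * ((m.choose k : ℂ)) * z ^ (2 * k + 1))]
    rw [Nat.choose_succ_self]
    have key : ∀ k, ((l.choose (k + 1) : ℂ)) * (((m + 1).choose (k + 1) : ℂ)) * z ^ (2 * (k + 1) + 1) =
        z * (((l.choose (k + 1) : ℂ)) * ((m.choose k : ℂ)) * z ^ (2 * k + 2)) +
          ((l.choose (k + 1) : ℂ)) * ((m.choose (k + 1) : ℂ)) * z ^ (2 * (k + 1) + 1) := by
      intro k
      rw [Nat.choose_succ_succ m k]
      push_cast
      ring
    rw [Finset.sum_congr rfl fun k _ => key k, Finset.sum_add_distrib, ← Finset.mul_sum]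
    simp only [Nat.cast_zero, zero_mul, mul_zero, add_zero, Nat.choose_zero_right, Nat.cast_one,
      one_mul, mul_one, pow_one]
    ring

lemma fcSS_empty {n : ℕ} {x : ℤ} (h : fcPaths n x = ∅) (e : Bool) (z : ℂ) : fcSS n x e z = 0 := by
  rw [fcSS, h, Finset.sum_empty]

theorem fcSS_closed (z : ℂ) : ∀ N lam mu : ℕ, lam + mu = N → 1 ≤ lam →
    fcSS (lam + mu) ((lam : ℤ) - (mu : ℤ)) true z = gR lam mu z ∧
      fcSS (lam + mu) ((lam : ℤ) - (mu : ℤ)) false z = gL lam mu z := by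
  intro N
  induction N using Nat.strong_induction_on with
  | _ N ih =>
    intro lam mu hN hlam
    cases mu with
    | zero =>
      simp only [Nat.add_zero, Nat.cast_zero, sub_zero] at *
      cases' Nat.lt_or_ge lam 2 with h2 h2
      · have : lam = 1 := by omega
        subst this
        norm_num [fcSS_one_true, fcSS_one_false, gR, gL]
      · obtain ⟨l, rfl⟩ : ∃ l, lam = l + 1 := ⟨lam - 1, by omega⟩
        have hl : 1 ≤ l := by omega
        have h1 := ih l (by omega) l 0 (by omega) hl
        simp only [Nat.add_zero, Nat.cast_zero, sub_zero] at h1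
        rw [show ((l + 1 : ℕ) : ℤ) = (l : ℤ) + 1 by push_cast; ring]
        constructor
        · rw [fcSS_rec_true hl, show (l : ℤ) + 1 - 1 = (l : ℤ) by ring, h1.1, h1.2]
          simp [gR, gL]
        · rw [fcSS_rec_false hl]
          have hemp : fcPaths l ((l : ℤ) + 1 + 1) = ∅ := fcPaths_empty_hi (by omega)
          rw [fcSS_empty hemp, fcSS_empty hemp]
          simp [gL]
    | succ m =>
      have hn' : 1 ≤ lam + m := by omega
      constructor
      · -- true part : decompose towards (lam - 1, m + 1)
        rw [show (lam + (m + 1) : ℕ) = (lam + m) + 1 by ring, fcSS_rec_true hn']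
        cases' Nat.lt_or_ge lam 2 with h2 h2
        · have : lam = 1 := by omega
          subst this
          have hemp : fcPaths (1 + m) ((((1:ℕ):ℤ) - ((m + 1 : ℕ):ℤ)) - 1) = ∅ := by
            refine fcPaths_empty_lo (by omega) ?_
            push_cast; omega
          rw [fcSS_empty hemp, fcSS_empty hemp]
          simp only [mul_zero, add_zero]
          rw [gR, if_neg (Nat.succ_ne_zero m)]
          simp
        · obtain ⟨l, rfl⟩ : ∃ l, lam = l + 2 := ⟨lam - 2, by omega⟩
          have h1 := ih (l + 1 + (m + 1)) (by omega) (l + 1) (m + 1) rfl (by omega)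
          rw [show (l + 2 + m : ℕ) = (l + 1) + (m + 1) by ring,
            show ((l + 2 : ℕ) : ℤ) - ((m + 1 : ℕ) : ℤ) - 1 = ((l + 1 : ℕ) : ℤ) - ((m + 1 : ℕ) : ℤ) by
              push_cast; ring, h1.1, h1.2]
          exact (gR_rec l m z).symm
      · -- false part : decompose towards (lam, m)
        rw [show (lam + (m + 1) : ℕ) = (lam + m) + 1 by ring, fcSS_rec_false hn']
        have h1 := ih (lam + m) (by omega) lam m rfl hlam
        rw [show ((lam : ℕ) : ℤ) - ((m + 1 : ℕ) : ℤ) + 1 = ((lam : ℕ) : ℤ) - ((m : ℕ) : ℤ) by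
          push_cast; ring, h1.1, h1.2]
        obtain ⟨l, rfl⟩ : ∃ l, lam = l + 1 := ⟨lam - 1, by omega⟩
        exact (gL_rec l m z).symm

def fcC (m ε : ℝ) (lam mu : ℕ) : ℝ :=
  (1 + m ^ 2 * ε ^ 2) ^ ((1 - ((lam + mu : ℕ) : ℝ)) / 2)

def fcB1 (m ε : ℝ) (lam mu : ℕ) : ℝ :=
  fcC m ε lam mu * (if mu = 0 then 0 else ∑ k ∈ Finset.range lam,
    ((lam - 1).choose k : ℝ) * ((mu - 1).choose k : ℝ) * (-1 : ℝ) ^ k * (m * ε) ^ (2 * k + 1))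

def fcB2 (m ε : ℝ) (lam mu : ℕ) : ℝ :=
  fcC m ε lam mu * (if mu = 0 then 1 else ∑ k ∈ Finset.range lam,
    ((lam - 1).choose (k + 1) : ℝ) * ((mu - 1).choose k : ℝ) * (-1 : ℝ) ^ (k + 1) * (m * ε) ^ (2 * k + 2))

lemma negI_pow_odd (a : ℂ) (k : ℕ) :
    (-Complex.I * a) ^ (2 * k + 1) = ((-1 : ℂ) ^ k * a ^ (2 * k + 1)) * (-Complex.I) := by
  have h2 : (-Complex.I) ^ 2 = -1 := by
    rw [neg_pow, Complex.I_sq]; ring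
  rw [mul_pow, pow_succ, pow_mul, h2]
  ring

lemma negI_pow_even (a : ℂ) (k : ℕ) :
    (-Complex.I * a) ^ (2 * k + 2) = (-1 : ℂ) ^ (k + 1) * a ^ (2 * k + 2) := by
  have h2 : (-Complex.I) ^ 2 = -1 := by
    rw [neg_pow, Complex.I_sq]; ring
  rw [mul_pow, show 2 * k + 2 = 2 * (k + 1) by ring, pow_mul, h2]

lemma fcB_eq (m ε : ℝ) (lam mu : ℕ) (hlam : 1 ≤ lam) :
    fcB m ε lam mu = (fcB1 m ε lam mu : ℂ) + (fcB2 m ε lam mu : ℂ) * Complex.I := by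
  rw [fcB, fcAmp, ← fcSS_add,
    (fcSS_closed (-Complex.I * (m * ε)) (lam + mu) lam mu rfl hlam).1,
    (fcSS_closed (-Complex.I * (m * ε)) (lam + mu) lam mu rfl hlam).2,
    fcB1, fcB2]
  have hC : (((1 + m ^ 2 * ε ^ 2) ^ ((1 - ((lam + mu : ℕ) : ℝ)) / 2) : ℝ) : ℂ) =
      (fcC m ε lam mu : ℂ) := by rw [fcC]
  rw [hC]
  cases mu with
  | zero =>
    simp only [gR, gL, if_pos rfl]
    push_cast
    ring
  | succ n =>
    simp only [gR, gL, if_neg (Nat.succ_ne_zero n)]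
    push_cast
    have hL : (fcC m ε lam (n+1) : ℂ) * Complex.I *
        (∑ k ∈ Finset.range lam, ((lam - 1).choose k : ℂ) * (n.choose k : ℂ) *
          (-Complex.I * ((m:ℂ) * ε)) ^ (2 * k + 1)) =
        ∑ k ∈ Finset.range lam, (fcC m ε lam (n+1) : ℂ) *
          (((lam - 1).choose k : ℂ) * (n.choose k : ℂ) * (-1) ^ k * ((m:ℂ) * ε) ^ (2 * k + 1)) := by
      rw [Finset.mul_sum]
      refine Finset.sum_congr rfl fun k _ => ?_
      rw [negI_pow_odd ((m:ℂ) * ε) k]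
      push_cast
      ring_nf
      rw [Complex.I_sq]
      ring
    have hR : (fcC m ε lam (n+1) : ℂ) * Complex.I *
        (∑ k ∈ Finset.range lam, ((lam - 1).choose (k + 1) : ℂ) * (n.choose k : ℂ) *
          (-Complex.I * ((m:ℂ) * ε)) ^ (2 * k + 2)) =
        (∑ k ∈ Finset.range lam, (fcC m ε lam (n+1) : ℂ) *
          (((lam - 1).choose (k + 1) : ℂ) * (n.choose k : ℂ) * (-1) ^ (k + 1) *
            ((m:ℂ) * ε) ^ (2 * k + 2))) * Complex.I := by
      rw [Finset.mul_sum, Finset.sum_mul]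
      refine Finset.sum_congr rfl fun k _ => ?_
      rw [negI_pow_even ((m:ℂ) * ε) k]
      push_cast
      ring
    rw [mul_add, hL, hR, add_comm, Finset.mul_sum, Finset.mul_sum]


lemma hasSum_choose_geom (k : ℕ) {q : ℝ} (hq : |q| < 1) :
    HasSum (fun j : ℕ => ((j.choose k : ℝ)) * q ^ (j + 1)) (q ^ (k + 1) / (1 - q) ^ (k + 1)) := by
  have H := hasSum_choose_mul_geometric_of_norm_lt_one (𝕜 := ℝ) k (r := q)
    (by rwa [Real.norm_eq_abs])
  have H2 := H.mul_left (q ^ (k + 1))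
  have He : (fun n : ℕ => (((n + k).choose k : ℝ)) * q ^ (n + k + 1)) =
      fun n : ℕ => q ^ (k + 1) * ((((n + k).choose k : ℝ)) * q ^ n) := by
    funext n
    ring
  have H3 : HasSum (fun n : ℕ => (((n + k).choose k : ℝ)) * q ^ (n + k + 1))
      (q ^ (k + 1) * (1 / (1 - q) ^ (k + 1))) := by rw [He]; exact H2
  have H4 := (hasSum_nat_add_iff (f := fun j : ℕ => ((j.choose k : ℝ)) * q ^ (j + 1)) k).mp H3
  have hz : ∑ i ∈ Finset.range k, ((i.choose k : ℝ)) * q ^ (i + 1) = 0 := by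
    refine Finset.sum_eq_zero fun i hi => ?_
    rw [Nat.choose_eq_zero_of_lt (Finset.mem_range.mp hi)]
    simp
  rw [hz, add_zero] at H4
  convert H4 using 1
  · rfl
  ring


/-- For fixed `λ ∈ ℤ₊`, the series `Σ_{μ=0}^∞ b₁(λ,μ,m,ε)` and `Σ_{μ=0}^∞ b₂(λ,μ,m,ε)`
converge to `(−1)^(λ+1)(1+√(m²ε²+1))/(mε)` and `(−1)^(λ+1)`. -/
theorem stmt7 (m ε : ℝ) (hε : 0 < ε) (hm : 0 < m) (lam : ℕ) (hlam : 1 ≤ lam) :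
    HasSum (fun mu : ℕ => (fcB m ε lam mu).re)
      ((-1 : ℝ) ^ (lam + 1) * ((1 + Real.sqrt (m ^ 2 * ε ^ 2 + 1)) / (m * ε))) ∧
    HasSum (fun mu : ℕ => (fcB m ε lam mu).im) ((-1 : ℝ) ^ (lam + 1)) := by
  set a : ℝ := m * ε with ha_def
  have ha : 0 < a := mul_pos hm hε
  set s : ℝ := Real.sqrt (1 + a ^ 2) with hs_def
  have hs0 : (0:ℝ) < 1 + a ^ 2 := by positivity
  have hs2 : s ^ 2 = 1 + a ^ 2 := Real.sq_sqrt hs0.le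
  have hs1 : 1 < s := by
    rw [hs_def, show (1:ℝ) < Real.sqrt (1 + a ^ 2) ↔ (1:ℝ)^2 < 1 + a^2 from
      Real.lt_sqrt (by norm_num)]
    nlinarith
  have hspos : 0 < s := by linarith
  set q : ℝ := s⁻¹ with hq_def
  have hq0 : 0 < q := by positivity
  have hq1 : q < 1 := by rw [hq_def, inv_lt_one_iff₀]; right; exact hs1
  have hqabs : |q| < 1 := by rw [abs_of_pos hq0]; exact hq1
  have h1q : 0 < 1 - q := by linarith
  set P : ℝ := (1 + a ^ 2) ^ ((1 - (lam : ℝ)) / 2) with hP_def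
  have hCfact : ∀ mu : ℕ, fcC m ε lam mu = P * q ^ mu := by
    intro mu
    rw [fcC, hP_def, show (1 : ℝ) + m ^ 2 * ε ^ 2 = 1 + a ^ 2 by rw [ha_def]; ring]
    rw [show (1 - ((lam + mu : ℕ) : ℝ)) / 2 = (1 - (lam : ℝ)) / 2 + (-(1/2) : ℝ) * (mu : ℕ) by
      push_cast; ring]
    rw [Real.rpow_add hs0, Real.rpow_mul hs0.le, Real.rpow_natCast]
    congr 2
    rw [show (-(1/2) : ℝ) = -(2⁻¹ : ℝ) by norm_num, Real.rpow_neg hs0.le]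
    congr 1
    rw [hs_def, Real.sqrt_eq_rpow]
    norm_num
  set t : ℝ := -(a ^ 2) * (q / (1 - q)) with ht_def
  have hsne : s - 1 ≠ 0 := by linarith
  have hqq : q / (1 - q) = 1 / (s - 1) := by
    rw [div_eq_div_iff h1q.ne' hsne]
    rw [hq_def]
    field_simp
  have ha2 : a ^ 2 = (s - 1) * (s + 1) := by nlinarith
  have ht1 : t + 1 = -s := by
    rw [ht_def, hqq, ha2, mul_one_div, neg_div, mul_comm (s-1), mul_div_assoc, div_self hsne, mul_one]
    ring
  have hbin : ∑ k ∈ Finset.range lam, ((lam - 1).choose k : ℝ) * t ^ k = (-s) ^ (lam - 1) := by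
    rw [← ht1, add_pow t 1 (lam - 1), show lam - 1 + 1 = lam from by omega]
    refine Finset.sum_congr rfl fun k hk => ?_
    rw [one_pow]
    ring
  have hPs : P * s ^ (lam - 1) = 1 := by
    rw [hP_def, show (1 + a ^ 2) = s ^ 2 by rw [hs2], ← Real.rpow_natCast s 2,
      ← Real.rpow_mul hspos.le, ← Real.rpow_natCast s (lam - 1), ← Real.rpow_add hspos]
    rw [show ((2:ℕ):ℝ) * ((1 - (lam:ℝ))/2) + ((lam - 1 : ℕ):ℝ) = 0 by
      rw [Nat.cast_sub hlam]; push_cast; ring]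
    exact Real.rpow_zero s
  have hterm : ∀ k : ℕ, q ^ (k + 1) / (1 - q) ^ (k + 1) = (q / (1 - q)) * (q / (1 - q)) ^ k := by
    intro k
    rw [← div_pow, pow_succ]
    exact mul_comm _ _
  -- B1 series
  set c1 : ℕ → ℝ := fun k => P * ((lam - 1).choose k : ℝ) * (-1 : ℝ) ^ k * a ^ (2 * k + 1) with hc1
  have hB1shift : HasSum (fun j : ℕ => fcB1 m ε lam (j + 1))
      (∑ k ∈ Finset.range lam, c1 k * (q ^ (k + 1) / (1 - q) ^ (k + 1))) := by
    have per : ∀ k ∈ Finset.range lam, HasSum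
        (fun j : ℕ => c1 k * (((j.choose k : ℝ)) * q ^ (j + 1)))
        (c1 k * (q ^ (k + 1) / (1 - q) ^ (k + 1))) :=
      fun k _ => (hasSum_choose_geom k hqabs).mul_left _
    have H := hasSum_sum per
    convert H using 1
    funext j
    rw [fcB1, if_neg (Nat.succ_ne_zero j), hCfact, Nat.succ_sub_one, Finset.mul_sum]
    refine Finset.sum_congr rfl fun k _ => ?_
    rw [hc1]
    ring
  have hB10 : fcB1 m ε lam 0 = 0 := by rw [fcB1, if_pos rfl, mul_zero]
  have hB1 : HasSum (fun mu : ℕ => fcB1 m ε lam mu)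
      (∑ k ∈ Finset.range lam, c1 k * (q ^ (k + 1) / (1 - q) ^ (k + 1))) := by
    have := (hasSum_nat_add_iff (f := fun mu : ℕ => fcB1 m ε lam mu) 1).mp hB1shift
    simpa [hB10] using this
  have hsign : ((-1:ℝ)) ^ (lam - 1) = (-1 : ℝ) ^ (lam + 1) := by
    rw [show lam + 1 = (lam - 1) + 2 from by omega, pow_add]
    norm_num
  have hsqrt : Real.sqrt (m ^ 2 * ε ^ 2 + 1) = s := by
    rw [hs_def]
    congr 1
    rw [ha_def]
    ring
  have hT1 : ∑ k ∈ Finset.range lam, c1 k * (q ^ (k + 1) / (1 - q) ^ (k + 1)) =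
      (-1 : ℝ) ^ (lam + 1) * ((1 + Real.sqrt (m ^ 2 * ε ^ 2 + 1)) / (m * ε)) := by
    have e1 : ∀ k ∈ Finset.range lam, c1 k * (q ^ (k + 1) / (1 - q) ^ (k + 1)) =
        (P * a * (q / (1 - q))) * (((lam - 1).choose k : ℝ) * t ^ k) := by
      intro k _
      rw [hterm k, hc1, ht_def]
      rw [mul_pow, mul_pow]
      ring
    rw [Finset.sum_congr rfl e1, ← Finset.mul_sum, hbin, hsqrt, ← ha_def, hqq, neg_pow, hsign]
    calc P * a * (1 / (s - 1)) * ((-1:ℝ) ^ (lam + 1) * s ^ (lam - 1))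
        = (-1:ℝ) ^ (lam + 1) * (a * (1 / (s - 1))) * (P * s ^ (lam - 1)) := by ring
      _ = (-1:ℝ) ^ (lam + 1) * (a * (1 / (s - 1))) := by rw [hPs, mul_one]
      _ = (-1:ℝ) ^ (lam + 1) * ((1 + s) / a) := by
          congr 1
          rw [mul_one_div, div_eq_div_iff (by linarith) ha.ne']
          nlinarith
  -- B2 series
  set c2 : ℕ → ℝ := fun k =>
    P * ((lam - 1).choose (k + 1) : ℝ) * (-1 : ℝ) ^ (k + 1) * a ^ (2 * k + 2) with hc2
  have hB2shift : HasSum (fun j : ℕ => fcB2 m ε lam (j + 1))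
      (∑ k ∈ Finset.range lam, c2 k * (q ^ (k + 1) / (1 - q) ^ (k + 1))) := by
    have per : ∀ k ∈ Finset.range lam, HasSum
        (fun j : ℕ => c2 k * (((j.choose k : ℝ)) * q ^ (j + 1)))
        (c2 k * (q ^ (k + 1) / (1 - q) ^ (k + 1))) :=
      fun k _ => (hasSum_choose_geom k hqabs).mul_left _
    have H := hasSum_sum per
    convert H using 1
    funext j
    rw [fcB2, if_neg (Nat.succ_ne_zero j), hCfact, Nat.succ_sub_one, Finset.mul_sum]
    refine Finset.sum_congr rfl fun k _ => ?_
    rw [hc2]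
    ring
  have hB20 : fcB2 m ε lam 0 = P := by
    rw [fcB2, if_pos rfl, mul_one, hCfact, pow_zero, mul_one]
  have hB2 : HasSum (fun mu : ℕ => fcB2 m ε lam mu)
      ((∑ k ∈ Finset.range lam, c2 k * (q ^ (k + 1) / (1 - q) ^ (k + 1))) + P) := by
    have := (hasSum_nat_add_iff (f := fun mu : ℕ => fcB2 m ε lam mu) 1).mp hB2shift
    simpa [hB20] using this
  have hT2 : (∑ k ∈ Finset.range lam, c2 k * (q ^ (k + 1) / (1 - q) ^ (k + 1))) + P =
      (-1 : ℝ) ^ (lam + 1) := by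
    have e2 : ∀ k ∈ Finset.range lam, c2 k * (q ^ (k + 1) / (1 - q) ^ (k + 1)) =
        P * (((lam - 1).choose (k + 1) : ℝ) * t ^ (k + 1)) := by
      intro k _
      rw [hterm k, hc2, ht_def]
      rw [mul_pow, mul_pow, pow_succ, pow_succ]
      ring
    rw [Finset.sum_congr rfl e2, ← Finset.mul_sum]
    have hglue : (∑ k ∈ Finset.range lam, ((lam - 1).choose (k + 1) : ℝ) * t ^ (k + 1)) + 1 =
        (-s) ^ (lam - 1) := by
      have h1 := Finset.sum_range_succ' (fun j : ℕ => ((lam - 1).choose j : ℝ) * t ^ j) lam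
      have h2 := Finset.sum_range_succ (fun j : ℕ => ((lam - 1).choose j : ℝ) * t ^ j) lam
      calc (∑ k ∈ Finset.range lam, ((lam - 1).choose (k + 1) : ℝ) * t ^ (k + 1)) + 1
          = ∑ j ∈ Finset.range (lam + 1), ((lam - 1).choose j : ℝ) * t ^ j := by
            rw [h1]; simp
        _ = ∑ j ∈ Finset.range lam, ((lam - 1).choose j : ℝ) * t ^ j := by
            rw [h2, Nat.choose_eq_zero_of_lt (by omega : lam - 1 < lam)]; simp
        _ = (-s) ^ (lam - 1) := hbin
    calc P * (∑ k ∈ Finset.range lam, ((lam - 1).choose (k + 1) : ℝ) * t ^ (k + 1)) + P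
        = P * ((∑ k ∈ Finset.range lam, ((lam - 1).choose (k + 1) : ℝ) * t ^ (k + 1)) + 1) := by
          ring
      _ = P * (-s) ^ (lam - 1) := by rw [hglue]
      _ = (-1:ℝ) ^ (lam + 1) := by
          rw [neg_pow, hsign]
          calc P * ((-1:ℝ) ^ (lam + 1) * s ^ (lam - 1))
              = (-1:ℝ) ^ (lam + 1) * (P * s ^ (lam - 1)) := by ring
            _ = (-1:ℝ) ^ (lam + 1) := by rw [hPs, mul_one]
  constructor
  · have hre : (fun mu : ℕ => (fcB m ε lam mu).re) = fun mu : ℕ => fcB1 m ε lam mu := by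
      funext mu
      rw [fcB_eq m ε lam mu hlam]
      simp
    rw [hre]
    exact hT1 ▸ hB1
  · have him : (fun mu : ℕ => (fcB m ε lam mu).im) = fun mu : ℕ => fcB2 m ε lam mu := by
      funext mu
      rw [fcB_eq m ε lam mu hlam]
      simp
    rw [him]
    exact hT2 ▸ hB2
end
end

section
/- For every ε > 0, m ≥ 0, and every finite set T ⊂ εℤ² such that every infinite checker path starting from (0,0) with first step to (ε,ε) passes through some point of T, we have Σ_{(x,t)∈T} P(x,t bypass T∖{(x,t)}; m,ε) = 1. -/
open scoped Classical

noncomputable section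

/-- The amplitude `a(εx, εn bypass T; m, ε)`: as `fcAmp`, but the sum is only over
checker paths avoiding every point of the set `T ⊂ εℤ²` (a point `(X, k)` encodes
the lattice point `(εX, εk)`). -/
def fcAmpBypass (m ε : ℝ) (T : Set (ℤ × ℤ)) (x : ℤ) (n : ℕ) : ℂ :=
  (((1 + m ^ 2 * ε ^ 2) ^ ((1 - (n : ℝ)) / 2) : ℝ) : ℂ) * Complex.I *
    ∑ f ∈ (fcPaths n x).filter (fun f => ∀ i ≤ n, (fcPos f i, (i : ℤ)) ∉ T),
      (-Complex.I * (m * ε)) ^ fcTurns f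

/-- The position (in units of `ε`) of an infinite checker path `g : ℕ → Bool`
(`true` = move `(ε,ε)`, `false` = move `(−ε,ε)`) after `i` moves. -/
def fcPosInf (g : ℕ → Bool) (i : ℕ) : ℤ :=
  ∑ j ∈ Finset.range i, (if g j then (1 : ℤ) else -1)

namespace FC

lemma mem_fcPaths {n : ℕ} {x : ℤ} {f : Fin n → Bool} :
    f ∈ fcPaths n x ↔ (fcStep f 0 = true ∧ fcPos f n = x) := by
  simp only [fcPaths, Finset.mem_filter, Finset.mem_univ, true_and]
  constructor
  · rintro ⟨h1, h2⟩
    refine ⟨?_, h2⟩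
    unfold fcStep
    split
    · exact h1 _ rfl
    · rfl
  · rintro ⟨h1, h2⟩
    refine ⟨?_, h2⟩
    intro i hi
    have h0 : (0:ℕ) < n := lt_of_le_of_lt (Nat.zero_le _) i.2
    have : f ⟨0, h0⟩ = true := by
      unfold fcStep at h1; rwa [dif_pos h0] at h1
    convert this using 2
    exact Fin.ext hi

lemma fcStep_snoc_lt {n : ℕ} (g : Fin n → Bool) (b : Bool) {i : ℕ} (hi : i < n) :
    fcStep (Fin.snoc g b) i = fcStep g i := by
  have hi' : i < n + 1 := Nat.lt_succ_of_lt hi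
  rw [fcStep, dif_pos hi', fcStep, dif_pos hi]
  have : (⟨i, hi'⟩ : Fin (n+1)) = Fin.castSucc ⟨i, hi⟩ := rfl
  rw [this, Fin.snoc_castSucc]

lemma fcStep_snoc_last {n : ℕ} (g : Fin n → Bool) (b : Bool) :
    fcStep (Fin.snoc g b) n = b := by
  rw [fcStep, dif_pos (Nat.lt_succ_self n)]
  have : (⟨n, Nat.lt_succ_self n⟩ : Fin (n+1)) = Fin.last n := rfl
  rw [this, Fin.snoc_last]

lemma fcPos_congr {n m : ℕ} {f : Fin n → Bool} {g : Fin m → Bool} {i : ℕ}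
    (h : ∀ j < i, fcStep f j = fcStep g j) : fcPos f i = fcPos g i := by
  unfold fcPos
  exact Finset.sum_congr rfl fun j hj => by rw [h j (Finset.mem_range.mp hj)]

lemma fcPos_succ {n : ℕ} (f : Fin n → Bool) (i : ℕ) :
    fcPos f (i+1) = fcPos f i + (if fcStep f i then 1 else -1) := by
  unfold fcPos; rw [Finset.sum_range_succ]

lemma fcPos_snoc {n : ℕ} (g : Fin n → Bool) (b : Bool) {i : ℕ} (hi : i ≤ n) :
    fcPos (Fin.snoc g b) i = fcPos g i :=
  fcPos_congr fun j hj => fcStep_snoc_lt g b (lt_of_lt_of_le hj hi)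

lemma fcPos_snoc_succ {n : ℕ} (g : Fin n → Bool) (b : Bool) :
    fcPos (Fin.snoc g b) (n+1) = fcPos g n + (if b then 1 else -1) := by
  rw [fcPos_succ, fcPos_snoc g b le_rfl, fcStep_snoc_last]

lemma abs_fcPos_le {n : ℕ} (f : Fin n → Bool) (i : ℕ) : |fcPos f i| ≤ (i : ℤ) := by
  unfold fcPos
  calc |∑ j ∈ Finset.range i, (if fcStep f j then (1:ℤ) else -1)|
      ≤ ∑ j ∈ Finset.range i, |if fcStep f j then (1:ℤ) else -1| :=
        Finset.abs_sum_le_sum_abs _ _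
    _ ≤ ∑ _j ∈ Finset.range i, 1 := by
        apply Finset.sum_le_sum; intro j _; split <;> simp
    _ = (i : ℤ) := by simp

lemma parity_filter (h : ℕ → Bool) (k : ℕ) :
    ((Finset.range k).filter fun i => h i ≠ h (i+1)).card % 2 = (if h 0 = h k then 0 else 1) := by
  induction k with
  | zero => simp
  | succ k ih =>
    rw [Finset.range_add_one, Finset.filter_insert]
    by_cases hk : h k = h (k+1)
    · rw [if_neg (by simp [hk]), ih, hk]
    · rw [if_pos hk, Finset.card_insert_of_notMem (by simp), Nat.add_mod, ih]
      cases hb : h 0 <;> cases hc : h k <;> cases hd : h (k+1) <;> simp_all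

lemma fcTurns_snoc {n : ℕ} (hn : 1 ≤ n) (g : Fin n → Bool) (b : Bool) :
    fcTurns (Fin.snoc g b) = fcTurns g + (if fcStep g (n-1) = b then 0 else 1) := by
  obtain ⟨k, rfl⟩ : ∃ k, n = k + 1 := ⟨n - 1, (Nat.succ_pred_eq_of_pos hn).symm⟩
  unfold fcTurns
  simp only [Nat.add_sub_cancel]
  rw [Finset.range_add_one, Finset.filter_insert]
  have hstep : ∀ i < k + 1, fcStep (Fin.snoc g b : Fin (k+2) → Bool) i = fcStep g i :=
    fun i hi => fcStep_snoc_lt g b hi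
  have hfilter : (Finset.range k).filter
      (fun i => fcStep (Fin.snoc g b : Fin (k+2) → Bool) i ≠ fcStep (Fin.snoc g b : Fin (k+2) → Bool) (i+1))
      = (Finset.range k).filter (fun i => fcStep g i ≠ fcStep g (i+1)) := by
    apply Finset.filter_congr
    intro i hi
    have hi' := Finset.mem_range.mp hi
    rw [hstep i (by omega), hstep (i+1) (by omega)]
  have hlast : fcStep (Fin.snoc g b : Fin (k+2) → Bool) (k+1) = b := fcStep_snoc_last g b
  by_cases hc : fcStep g k = b
  · rw [if_neg (by rw [hstep k (by omega), hlast, hc]; simp), hfilter, if_pos hc]; omega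
  · rw [if_pos (by rw [hstep k (by omega), hlast]; exact hc), if_neg hc,
      Finset.card_insert_of_notMem (by simp), hfilter]










def w (m ε : ℝ) : ℂ := -Complex.I * (m * ε)

def Dset (T : Finset (ℤ × ℤ)) (n : ℕ) (x : ℤ) (b : Bool) : Finset (Fin n → Bool) :=
  Finset.univ.filter fun f => fcStep f 0 = true ∧ (∀ i < n, (fcPos f i, (i:ℤ)) ∉ T)
    ∧ fcPos f n = x ∧ fcStep f (n-1) = b

def Aset (T : Finset (ℤ × ℤ)) (n : ℕ) (x : ℤ) (b : Bool) : Finset (Fin n → Bool) :=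
  Finset.univ.filter fun f => fcStep f 0 = true ∧ (∀ i ≤ n, (fcPos f i, (i:ℤ)) ∉ T)
    ∧ fcPos f n = x ∧ fcStep f (n-1) = b

def E' (m ε : ℝ) (T : Finset (ℤ × ℤ)) (n : ℕ) (x : ℤ) (b : Bool) : ℂ :=
  ∑ f ∈ Dset T n x b, (w m ε) ^ fcTurns f

def E (m ε : ℝ) (T : Finset (ℤ × ℤ)) (n : ℕ) (x : ℤ) (b : Bool) : ℂ :=
  ∑ f ∈ Aset T n x b, (w m ε) ^ fcTurns f

lemma Aset_eq (T : Finset (ℤ × ℤ)) (n : ℕ) (x : ℤ) (b : Bool) :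
    Aset T n x b = if (x, (n:ℤ)) ∈ T then ∅ else Dset T n x b := by
  by_cases h : (x, (n:ℤ)) ∈ T
  · rw [if_pos h]
    ext f
    simp only [Aset, Finset.mem_filter, Finset.mem_univ, true_and, Finset.notMem_empty,
      iff_false, not_and]
    intro _ havoid hpos _
    rw [← hpos] at h
    exact havoid n le_rfl h
  · rw [if_neg h]
    ext f
    simp only [Aset, Dset, Finset.mem_filter, Finset.mem_univ, true_and]
    constructor
    · rintro ⟨h1, h2, h3, h4⟩
      exact ⟨h1, fun i hi => h2 i (le_of_lt hi), h3, h4⟩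
    · rintro ⟨h1, h2, h3, h4⟩
      refine ⟨h1, fun i hi => ?_, h3, h4⟩
      rcases lt_or_eq_of_le hi with hi' | rfl
      · exact h2 i hi'
      · rw [h3]; exact h

lemma E_eq (m ε : ℝ) (T : Finset (ℤ × ℤ)) (n : ℕ) (x : ℤ) (b : Bool) :
    E m ε T n x b = if (x, (n:ℤ)) ∈ T then 0 else E' m ε T n x b := by
  rw [E, Aset_eq]; split <;> simp [E']

lemma Dset_succ_sum (m ε : ℝ) (T : Finset (ℤ × ℤ)) {n : ℕ} (hn : 1 ≤ n) (x : ℤ)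
    (b c : Bool) :
    ∑ f ∈ (Dset T (n+1) x b).filter (fun f => fcStep f (n-1) = c), (w m ε) ^ fcTurns f
      = (w m ε) ^ (if c = b then 0 else 1) *
        ∑ g ∈ Aset T n (x - (if b then 1 else -1)) c, (w m ε) ^ fcTurns g := by
  rw [Finset.mul_sum]
  refine Finset.sum_nbij' (fun f => Fin.init f) (fun g => Fin.snoc g b) ?_ ?_ ?_ ?_ ?_
  · -- maps into Aset
    intro f hf
    simp only [Finset.mem_filter, Finset.mem_univ, true_and, Dset, Aset] at hf ⊢
    obtain ⟨⟨h1, h2, h3, h4⟩, h5⟩ := hf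
    have hstep : ∀ j < n, fcStep (Fin.init f) j = fcStep f j := by
      intro j hj
      rw [fcStep, dif_pos hj, fcStep, dif_pos (Nat.lt_succ_of_lt hj)]
      rfl
    have hpos : ∀ i ≤ n, fcPos (Fin.init f) i = fcPos f i := by
      intro i hi
      exact fcPos_congr fun j hj => hstep j (lt_of_lt_of_le hj hi)
    refine ⟨by rw [hstep 0 hn]; exact h1,
      fun i hi => by rw [hpos i hi]; exact h2 i (Nat.lt_succ_of_le hi), ?_,
      by rw [hstep (n-1) (by omega)]; exact h5⟩
    have hx : fcPos f (n+1) = fcPos f n + (if b then 1 else -1) := by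
      rw [fcPos_succ]
      congr 1
      rw [show fcStep f n = b from by simpa using h4]
    rw [hpos n le_rfl, ← h3, hx]
    ring
  · -- maps into Dset-filter
    intro g hg
    simp only [Finset.mem_filter, Finset.mem_univ, true_and, Dset, Aset] at hg ⊢
    obtain ⟨h1, h2, h3, h4⟩ := hg
    have hs0 : fcStep (Fin.snoc g b : Fin (n+1) → Bool) 0 = fcStep g 0 :=
      fcStep_snoc_lt g b hn
    refine ⟨⟨by rw [hs0]; exact h1, ?_, ?_, ?_⟩, ?_⟩
    · intro i hi
      rw [fcPos_snoc g b (Nat.lt_succ_iff.mp hi)]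
      exact h2 i (Nat.lt_succ_iff.mp hi)
    · rw [fcPos_snoc_succ, h3]; ring
    · simpa using fcStep_snoc_last g b
    · rw [fcStep_snoc_lt g b (by omega : n - 1 < n)]
      exact h4
  · -- left inverse
    intro f hf
    simp only [Finset.mem_filter, Finset.mem_univ, true_and, Dset] at hf
    obtain ⟨⟨h1, h2, h3, h4⟩, h5⟩ := hf
    have hb : b = f (Fin.last n) := by
      have : fcStep f n = b := by simpa using h4
      rw [← this, fcStep, dif_pos (Nat.lt_succ_self n)]
      rfl
    rw [hb]
    exact Fin.snoc_init_self f
  · -- right inverse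
    intro g _
    simp
  · -- weights
    intro f hf
    simp only [Finset.mem_filter, Finset.mem_univ, true_and, Dset] at hf
    obtain ⟨⟨h1, h2, h3, h4⟩, h5⟩ := hf
    have hb : b = f (Fin.last n) := by
      have : fcStep f n = b := by simpa using h4
      rw [← this, fcStep, dif_pos (Nat.lt_succ_self n)]
      rfl
    have hf' : f = Fin.snoc (Fin.init f) b := by
      rw [hb]; exact (Fin.snoc_init_self f).symm
    have hstep : fcStep (Fin.init f) (n-1) = fcStep f (n-1) := by
      rw [fcStep, dif_pos (by omega : n - 1 < n), fcStep,
        dif_pos (by omega : n - 1 < n + 1)]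
      rfl
    calc (w m ε) ^ fcTurns f
        = (w m ε) ^ (fcTurns (Fin.init f) + if fcStep (Fin.init f) (n-1) = b then 0 else 1) := by
          conv_lhs => rw [hf']
          rw [fcTurns_snoc hn]
      _ = (w m ε) ^ (if c = b then 0 else 1) * (w m ε) ^ fcTurns (Fin.init f) := by
          rw [hstep, h5, pow_add, mul_comm]

lemma E'_succ_true (m ε : ℝ) (T : Finset (ℤ × ℤ)) {n : ℕ} (hn : 1 ≤ n) (x : ℤ) :
    E' m ε T (n+1) x true = E m ε T n (x-1) true + w m ε * E m ε T n (x-1) false := by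
  rw [E', ← Finset.sum_filter_add_sum_filter_not (Dset T (n+1) x true)
    (fun f => fcStep f (n-1) = true)]
  have h2 : (Dset T (n+1) x true).filter (fun f => ¬ fcStep f (n-1) = true)
      = (Dset T (n+1) x true).filter (fun f => fcStep f (n-1) = false) := by
    apply Finset.filter_congr
    intro f _
    simp [Bool.not_eq_true]
  rw [h2, Dset_succ_sum m ε T hn x true true, Dset_succ_sum m ε T hn x true false]
  simp [E]

lemma E'_succ_false (m ε : ℝ) (T : Finset (ℤ × ℤ)) {n : ℕ} (hn : 1 ≤ n) (x : ℤ) :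
    E' m ε T (n+1) x false = w m ε * E m ε T n (x+1) true + E m ε T n (x+1) false := by
  rw [E', ← Finset.sum_filter_add_sum_filter_not (Dset T (n+1) x false)
    (fun f => fcStep f (n-1) = true)]
  have h2 : (Dset T (n+1) x false).filter (fun f => ¬ fcStep f (n-1) = true)
      = (Dset T (n+1) x false).filter (fun f => fcStep f (n-1) = false) := by
    apply Finset.filter_congr
    intro f _
    simp [Bool.not_eq_true]
  rw [h2, Dset_succ_sum m ε T hn x false true, Dset_succ_sum m ε T hn x false false]
  have : x - (if (false : Bool) then (1:ℤ) else -1) = x + 1 := by norm_num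
  rw [this]
  simp [E, add_comm]

lemma w_re (m ε : ℝ) : (w m ε).re = 0 := by simp [w]

lemma pow_im_eq_zero {v : ℂ} (hv : v.re = 0) {k : ℕ} (hk : k % 2 = 0) : (v ^ k).im = 0 := by
  obtain ⟨j, rfl⟩ : ∃ j, k = 2 * j := ⟨k / 2, by omega⟩
  have h2 : v ^ 2 = ((-(v.im ^ 2) : ℝ) : ℂ) := by
    apply Complex.ext <;> simp [pow_two, Complex.mul_re, Complex.mul_im, hv]
  rw [pow_mul, h2, ← Complex.ofReal_pow]
  exact Complex.ofReal_im _

lemma pow_re_eq_zero {v : ℂ} (hv : v.re = 0) {k : ℕ} (hk : k % 2 = 1) : (v ^ k).re = 0 := by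
  obtain ⟨j, rfl⟩ : ∃ j, k = 2 * j + 1 := ⟨k / 2, by omega⟩
  have h2 : v ^ 2 = ((-(v.im ^ 2) : ℝ) : ℂ) := by
    apply Complex.ext <;> simp [pow_two, Complex.mul_re, Complex.mul_im, hv]
  rw [pow_succ, pow_mul, h2, ← Complex.ofReal_pow, Complex.mul_re,
    Complex.ofReal_re, Complex.ofReal_im, hv]
  ring

lemma fcTurns_mod_two {T : Finset (ℤ × ℤ)} {n : ℕ} {x : ℤ} {b : Bool} {f : Fin n → Bool}
    (hf : f ∈ Dset T n x b) : fcTurns f % 2 = (if b then 0 else 1) := by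
  simp only [Dset, Finset.mem_filter, Finset.mem_univ, true_and] at hf
  obtain ⟨h1, _, _, h4⟩ := hf
  have := parity_filter (fcStep f) (n - 1)
  rw [h1, h4] at this
  rw [fcTurns, this]
  cases b <;> simp

lemma E'_true_im (m ε : ℝ) (T : Finset (ℤ × ℤ)) (n : ℕ) (x : ℤ) :
    (E' m ε T n x true).im = 0 := by
  rw [E', Complex.im_sum]
  apply Finset.sum_eq_zero
  intro f hf
  exact pow_im_eq_zero (w_re m ε) (by simpa using fcTurns_mod_two hf)

lemma E'_false_re (m ε : ℝ) (T : Finset (ℤ × ℤ)) (n : ℕ) (x : ℤ) :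
    (E' m ε T n x false).re = 0 := by
  rw [E', Complex.re_sum]
  apply Finset.sum_eq_zero
  intro f hf
  exact pow_re_eq_zero (w_re m ε) (by simpa using fcTurns_mod_two hf)

lemma sq_abs_add_of {A B : ℂ} (hA : A.im = 0) (hB : B.re = 0) :
    ‖A + B‖ ^ 2 = ‖A‖ ^ 2 + ‖B‖ ^ 2 := by
  simp only [Complex.sq_norm, Complex.normSq_apply, Complex.add_re, Complex.add_im, hA, hB]
  ring

lemma normSq_step (A B v : ℂ) (hv : v.re = 0) :
    ‖A + v * B‖ ^ 2 + ‖v * A + B‖ ^ 2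
      = (1 + ‖v‖ ^ 2) * (‖A‖ ^ 2 + ‖B‖ ^ 2) := by
  simp only [Complex.sq_norm, Complex.normSq_apply, Complex.add_re, Complex.add_im,
    Complex.mul_re, Complex.mul_im, hv]
  ring

lemma Dset_eq_empty {T : Finset (ℤ × ℤ)} {n : ℕ} {x : ℤ} {b : Bool}
    (h : ¬ |x| ≤ (n:ℤ)) : Dset T n x b = ∅ := by
  apply Finset.eq_empty_of_forall_notMem
  intro f hf
  simp only [Dset, Finset.mem_filter, Finset.mem_univ, true_and] at hf
  exact h (hf.2.2.1 ▸ abs_fcPos_le f n)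

lemma Aset_eq_empty {T : Finset (ℤ × ℤ)} {n : ℕ} {x : ℤ} {b : Bool}
    (h : ¬ |x| ≤ (n:ℤ)) : Aset T n x b = ∅ := by
  apply Finset.eq_empty_of_forall_notMem
  intro f hf
  simp only [Aset, Finset.mem_filter, Finset.mem_univ, true_and] at hf
  exact h (hf.2.2.1 ▸ abs_fcPos_le f n)

lemma E'_eq_zero (m ε : ℝ) {T : Finset (ℤ × ℤ)} {n : ℕ} {x : ℤ} {b : Bool}
    (h : ¬ |x| ≤ (n:ℤ)) : E' m ε T n x b = 0 := by
  rw [E', Dset_eq_empty h, Finset.sum_empty]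

lemma E_eq_zero (m ε : ℝ) {T : Finset (ℤ × ℤ)} {n : ℕ} {x : ℤ} {b : Bool}
    (h : ¬ |x| ≤ (n:ℤ)) : E m ε T n x b = 0 := by
  rw [E, Aset_eq_empty h, Finset.sum_empty]

/-- The amplitude bridge: the bypass amplitude at an absorbed point equals the
normalization times the sum of the two arriving components. -/
lemma amp_bridge (m ε : ℝ) (T : Finset (ℤ × ℤ)) (p : ℤ × ℤ) (n : ℕ)
    (hn : (n:ℤ) = p.2) :
    ‖fcAmpBypass m ε (↑(T.erase p)) p.1 n‖ ^ 2
      = ((1 + m^2*ε^2) ^ ((1-(n:ℝ))/2))^2 *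
        (‖E' m ε T n p.1 true‖ ^ 2 + ‖E' m ε T n p.1 false‖ ^ 2) := by
  have key : fcAmpBypass m ε (↑(T.erase p)) p.1 n
      = (((1 + m^2*ε^2) ^ ((1-(n:ℝ))/2) : ℝ) : ℂ) * Complex.I *
        (E' m ε T n p.1 true + E' m ε T n p.1 false) := by
    rw [fcAmpBypass]
    congr 1
    have hdisj : Disjoint (Dset T n p.1 true) (Dset T n p.1 false) := by
      rw [Finset.disjoint_left]
      intro f hf hf'
      simp only [Dset, Finset.mem_filter, Finset.mem_univ, true_and] at hf hf'
      rw [hf.2.2.2] at hf'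
      exact absurd hf'.2.2.2 (by simp)
    rw [E', E', ← Finset.sum_union hdisj]
    refine Finset.sum_congr ?_ (fun _ _ => rfl)
    ext f
    simp only [Finset.mem_filter, Finset.mem_union, Dset, mem_fcPaths, Finset.mem_univ,
      true_and, Finset.mem_coe, Finset.mem_erase]
    constructor
    · rintro ⟨⟨h1, h2⟩, h3⟩
      have havoid : ∀ i < n, (fcPos f i, (i:ℤ)) ∉ T := by
        intro i hi hiT
        refine h3 i (le_of_lt hi) ⟨fun hcontra => ?_, hiT⟩
        have : (i:ℤ) = p.2 := by rw [← hcontra]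
        omega
      cases hb : fcStep f (n-1)
      · exact Or.inr ⟨h1, havoid, h2, rfl⟩
      · exact Or.inl ⟨h1, havoid, h2, rfl⟩
    · intro hor
      have hcond : fcStep f 0 = true ∧ (∀ i < n, (fcPos f i, (i:ℤ)) ∉ T) ∧ fcPos f n = p.1 := by
        rcases hor with ⟨h1, h2, h3, _⟩ | ⟨h1, h2, h3, _⟩ <;> exact ⟨h1, h2, h3⟩
      obtain ⟨h1, h2, h3⟩ := hcond
      refine ⟨⟨h1, h3⟩, fun i hi => ?_⟩
      rcases lt_or_eq_of_le hi with hi' | rfl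
      · rintro ⟨_, hmem⟩
        exact h2 i hi' hmem
      · rintro ⟨hne, _⟩
        exact hne (by rw [h3, hn])
  rw [key, norm_mul, norm_mul, Complex.norm_I, Complex.norm_real, Real.norm_eq_abs, mul_one]
  rw [mul_pow, sq_abs_add_of (E'_true_im m ε T n p.1) (E'_false_re m ε T n p.1)]
  congr 1
  rw [abs_of_nonneg (Real.rpow_nonneg (by positivity) _)]

def Qq (m ε : ℝ) (T : Finset (ℤ × ℤ)) (n : ℕ) : ℝ :=
  ∑ x ∈ Finset.Icc (-(n:ℤ)) (n:ℤ),
    (‖E m ε T n x true‖ ^ 2 + ‖E m ε T n x false‖ ^ 2)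

lemma abs_w_sq (m ε : ℝ) : ‖w m ε‖ ^ 2 = m^2 * ε^2 := by
  rw [w]
  rw [norm_mul, norm_mul]
  simp only [norm_neg, Complex.norm_I, Complex.norm_real, Real.norm_eq_abs, one_mul]
  rw [mul_pow, sq_abs, sq_abs]

lemma step_sum (m ε : ℝ) (T : Finset (ℤ × ℤ)) {n : ℕ} (hn : 1 ≤ n) :
    ∑ x ∈ Finset.Icc (-(↑(n+1):ℤ)) (↑(n+1):ℤ),
      (‖E' m ε T (n+1) x true‖ ^ 2 + ‖E' m ε T (n+1) x false‖ ^ 2)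
    = (1 + m^2*ε^2) * Qq m ε T n := by
  rw [Finset.sum_add_distrib]
  have h1 : ∑ x ∈ Finset.Icc (-(↑(n+1):ℤ)) (↑(n+1):ℤ), ‖E' m ε T (n+1) x true‖ ^ 2
      = ∑ y ∈ Finset.Icc (-(n:ℤ)) (n:ℤ),
          ‖E m ε T n y true + w m ε * E m ε T n y false‖ ^ 2 := by
    have hIcc : Finset.Icc (-(↑(n+1):ℤ)) (↑(n+1):ℤ)
        = Finset.map (addRightEmbedding 1) (Finset.Icc (-(n:ℤ)-2) (n:ℤ)) := by
      rw [Finset.map_add_right_Icc]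
      congr 1 <;> push_cast <;> ring
    rw [hIcc, Finset.sum_map]
    have hcong : ∀ y ∈ Finset.Icc (-(n:ℤ)-2) (n:ℤ),
        ‖E' m ε T (n+1) (addRightEmbedding 1 y) true‖ ^ 2
        = ‖E m ε T n y true + w m ε * E m ε T n y false‖ ^ 2 := by
      intro y _
      rw [addRightEmbedding_apply, E'_succ_true m ε T hn, add_sub_cancel_right]
    rw [Finset.sum_congr rfl hcong]
    refine (Finset.sum_subset (Finset.Icc_subset_Icc (by omega) le_rfl) ?_).symm
    intro y hy hy'
    simp only [Finset.mem_Icc] at hy hy'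
    have : ¬ |y| ≤ (n:ℤ) := by rw [abs_le]; omega
    rw [E_eq_zero m ε this, E_eq_zero m ε this]
    simp
  have h2 : ∑ x ∈ Finset.Icc (-(↑(n+1):ℤ)) (↑(n+1):ℤ), ‖E' m ε T (n+1) x false‖ ^ 2
      = ∑ y ∈ Finset.Icc (-(n:ℤ)) (n:ℤ),
          ‖w m ε * E m ε T n y true + E m ε T n y false‖ ^ 2 := by
    have hIcc : Finset.Icc (-(↑(n+1):ℤ)) (↑(n+1):ℤ)
        = Finset.map (addRightEmbedding (-1)) (Finset.Icc (-(n:ℤ)) ((n:ℤ)+2)) := by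
      rw [Finset.map_add_right_Icc]
      congr 1 <;> push_cast <;> ring
    rw [hIcc, Finset.sum_map]
    have hcong : ∀ y ∈ Finset.Icc (-(n:ℤ)) ((n:ℤ)+2),
        ‖E' m ε T (n+1) (addRightEmbedding (-1) y) false‖ ^ 2
        = ‖w m ε * E m ε T n y true + E m ε T n y false‖ ^ 2 := by
      intro y _
      rw [addRightEmbedding_apply, E'_succ_false m ε T hn]
      norm_num
    rw [Finset.sum_congr rfl hcong]
    refine (Finset.sum_subset (Finset.Icc_subset_Icc le_rfl (by omega)) ?_).symm
    intro y hy hy'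
    simp only [Finset.mem_Icc] at hy hy'
    have : ¬ |y| ≤ (n:ℤ) := by rw [abs_le]; omega
    rw [E_eq_zero m ε this, E_eq_zero m ε this]
    simp
  rw [h1, h2, ← Finset.sum_add_distrib, Qq, Finset.mul_sum]
  refine Finset.sum_congr rfl fun y _ => ?_
  rw [normSq_step _ _ _ (w_re m ε), abs_w_sq]

lemma absorb_split (m ε : ℝ) (T : Finset (ℤ × ℤ)) (n : ℕ) :
    Qq m ε T (n+1) + ∑ x ∈ Finset.Icc (-(↑(n+1):ℤ)) (↑(n+1):ℤ),
        (if (x, (↑(n+1):ℤ)) ∈ T then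
          ‖E' m ε T (n+1) x true‖ ^ 2 + ‖E' m ε T (n+1) x false‖ ^ 2
        else 0)
      = ∑ x ∈ Finset.Icc (-(↑(n+1):ℤ)) (↑(n+1):ℤ),
        (‖E' m ε T (n+1) x true‖ ^ 2 + ‖E' m ε T (n+1) x false‖ ^ 2) := by
  rw [Qq, ← Finset.sum_add_distrib]
  refine Finset.sum_congr rfl fun x _ => ?_
  rw [E_eq, E_eq]
  by_cases hmem : (x, (↑(n+1):ℤ)) ∈ T
  · rw [if_pos hmem, if_pos hmem, if_pos hmem]
    simp
  · rw [if_neg hmem, if_neg hmem, if_neg hmem]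
    simp

lemma absorbed_eq (m ε : ℝ) (T : Finset (ℤ × ℤ)) (n : ℕ) :
    ∑ p ∈ T.filter (fun p => p.2 = (↑(n+1):ℤ)),
      ‖fcAmpBypass m ε (↑(T.erase p)) p.1 p.2.toNat‖ ^ 2
    = ((1 + m^2*ε^2) ^ ((1-(↑(n+1):ℝ))/2))^2 *
      ∑ x ∈ Finset.Icc (-(↑(n+1):ℤ)) (↑(n+1):ℤ),
        (if (x, (↑(n+1):ℤ)) ∈ T then
          ‖E' m ε T (n+1) x true‖ ^ 2 + ‖E' m ε T (n+1) x false‖ ^ 2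
        else 0) := by
  set g : ℤ → ℝ := fun x =>
    ‖E' m ε T (n+1) x true‖ ^ 2 + ‖E' m ε T (n+1) x false‖ ^ 2 with hg
  have stepA : ∑ p ∈ T.filter (fun p => p.2 = (↑(n+1):ℤ)),
      ‖fcAmpBypass m ε (↑(T.erase p)) p.1 p.2.toNat‖ ^ 2
      = ∑ p ∈ T.filter (fun p => p.2 = (↑(n+1):ℤ)),
        ((1 + m^2*ε^2) ^ ((1-(↑(n+1):ℝ))/2))^2 * g p.1 := by
    refine Finset.sum_congr rfl fun p hp => ?_
    have hp2 : p.2 = (↑(n+1):ℤ) := (Finset.mem_filter.mp hp).2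
    have htn : p.2.toNat = n + 1 := by rw [hp2]; exact Int.toNat_natCast _
    rw [htn, amp_bridge m ε T p (n+1) hp2.symm]
  rw [stepA, ← Finset.mul_sum]
  congr 1
  have shrink : ∑ p ∈ T.filter (fun p => p.2 = (↑(n+1):ℤ)), g p.1
      = ∑ p ∈ T.filter (fun p => p.2 = (↑(n+1):ℤ) ∧ p.1 ∈ Finset.Icc (-(↑(n+1):ℤ)) (↑(n+1):ℤ)),
          g p.1 := by
    refine (Finset.sum_subset (fun p hp => ?_) ?_).symm
    · simp only [Finset.mem_filter] at hp ⊢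
      exact ⟨hp.1, hp.2.1⟩
    intro p hp hp'
    simp only [Finset.mem_filter] at hp hp'
    have hnot : p.1 ∉ Finset.Icc (-(↑(n+1):ℤ)) (↑(n+1):ℤ) := by
      intro hmem
      exact hp' ⟨hp.1, hp.2, hmem⟩
    rw [Finset.mem_Icc] at hnot
    have habs : ¬ |p.1| ≤ (↑(n+1):ℤ) := by rw [abs_le]; omega
    rw [hg]
    simp only [E'_eq_zero m ε habs, norm_zero]
    norm_num
  rw [shrink, Finset.sum_filter (fun x => (x, (↑(n+1):ℤ)) ∈ T) g |>.symm]
  refine Finset.sum_nbij' (fun p => p.1) (fun x => (x, (↑(n+1):ℤ))) ?_ ?_ ?_ ?_ ?_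
  · intro p hp
    simp only [Finset.mem_filter] at hp ⊢
    refine ⟨hp.2.2, ?_⟩
    have : (p.1, (↑(n+1):ℤ)) = p := by
      rw [← hp.2.1]
    rw [this]
    exact hp.1
  · intro x hx
    simp only [Finset.mem_filter] at hx ⊢
    exact ⟨hx.2, trivial, hx.1⟩
  · intro p hp
    simp only [Finset.mem_filter] at hp
    rw [← hp.2.1]
  · intro x _
    rfl
  · intro p _
    rfl

lemma E'_one (m ε : ℝ) {T : Finset (ℤ × ℤ)} (h0 : ((0:ℤ),(0:ℤ)) ∉ T) (x : ℤ) (b : Bool) :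
    E' m ε T 1 x b = if (x = 1 ∧ b = true) then 1 else 0 := by
  rw [E']
  have hstep0 : ∀ f : Fin 1 → Bool, fcStep f 0 = f ⟨0, Nat.zero_lt_one⟩ := by
    intro f
    rw [fcStep, dif_pos Nat.zero_lt_one]
  have hpos1 : ∀ f : Fin 1 → Bool, fcPos f 1 = (if fcStep f 0 then 1 else -1) := by
    intro f
    rw [fcPos, Finset.sum_range_one]
  by_cases hxb : x = 1 ∧ b = true
  · obtain ⟨rfl, rfl⟩ := hxb
    rw [if_pos ⟨rfl, rfl⟩]
    have hset : Dset T 1 1 true = {fun _ => true} := by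
      ext f
      simp only [Dset, Finset.mem_filter, Finset.mem_univ, true_and, Finset.mem_singleton]
      constructor
      · rintro ⟨h1, _, _, _⟩
        funext i
        rw [Subsingleton.elim i (⟨0, Nat.zero_lt_one⟩ : Fin 1)]
        rw [hstep0 f] at h1
        exact h1
      · rintro rfl
        refine ⟨by rw [hstep0], ?_, ?_, by rw [hstep0]⟩
        · intro i hi
          interval_cases i
          have : fcPos (fun _ : Fin 1 => true) 0 = 0 := by
            rw [fcPos, Finset.sum_range_zero]
          rw [this]
          exact_mod_cast h0
        · rw [hpos1, hstep0]
          norm_num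
    rw [hset, Finset.sum_singleton]
    have ht : fcTurns (fun _ : Fin 1 => true) = 0 := by
      rw [fcTurns]
      norm_num
    rw [ht, pow_zero]
  · rw [if_neg hxb]
    have hset : Dset T 1 x b = ∅ := by
      apply Finset.eq_empty_of_forall_notMem
      intro f hf
      simp only [Dset, Finset.mem_filter, Finset.mem_univ, true_and] at hf
      obtain ⟨h1, _, h3, h4⟩ := hf
      have hx1 : fcPos f 1 = 1 := by rw [hpos1, h1]; norm_num
      exact hxb ⟨by rw [← h3, hx1], by rw [← h4]; exact h1⟩
    rw [hset, Finset.sum_empty]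

lemma invariant (m ε : ℝ) (T : Finset (ℤ × ℤ)) (hposT : ∀ p ∈ T, 0 < p.2)
    (h0 : ((0:ℤ),(0:ℤ)) ∉ T) : ∀ {n : ℕ}, 1 ≤ n →
    ∑ p ∈ T.filter (fun p => p.2 ≤ (n:ℤ)),
      ‖fcAmpBypass m ε (↑(T.erase p)) p.1 p.2.toNat‖ ^ 2
    + (1 + m^2*ε^2) ^ (1-(n:ℝ)) * Qq m ε T n = 1 := by
  have hK : (0:ℝ) < 1 + m^2*ε^2 := by positivity
  intro n hn
  induction n with
  | zero => omega
  | succ n ih =>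
    rcases Nat.eq_or_lt_of_le hn with h1 | h2
    · -- base case n + 1 = 1, i.e. n = 0
      have hn0 : n = 0 := by omega
      subst hn0
      have hQ1 : Qq m ε T 1 = if ((1,1):ℤ×ℤ) ∈ T then 0 else 1 := by
        rw [Qq]
        rw [Finset.sum_eq_single_of_mem (1:ℤ) (by simp)]
        · rw [E_eq, E_eq, E'_one m ε h0, E'_one m ε h0]
          by_cases hmem : ((1,1) : ℤ×ℤ) ∈ T <;> simp [hmem]
        · intro x _ hx
          rw [E_eq, E_eq, E'_one m ε h0, E'_one m ε h0]
          simp [hx]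
      have hfeq : T.filter (fun p => p.2 ≤ ((0+1:ℕ):ℤ)) = T.filter (fun p => p.2 = ((0+1:ℕ):ℤ)) := by
        apply Finset.filter_congr
        intro p hp
        have := hposT p hp
        constructor
        · intro h; omega
        · intro h; omega
      have hS1 : ∑ p ∈ T.filter (fun p => p.2 ≤ ((0+1:ℕ):ℤ)),
          ‖fcAmpBypass m ε (↑(T.erase p)) p.1 p.2.toNat‖ ^ 2
          = if ((1,1):ℤ×ℤ) ∈ T then 1 else 0 := by
        rw [hfeq, absorbed_eq m ε T 0]
        have hone : ((1 + m^2*ε^2) ^ ((1-((0+1:ℕ):ℝ))/2)) = 1 := by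
          norm_num
        rw [hone]
        rw [one_pow, one_mul]
        rw [Finset.sum_eq_single_of_mem (1:ℤ) (by simp)]
        · rw [E'_one m ε h0, E'_one m ε h0]
          by_cases hmem : ((1,1) : ℤ×ℤ) ∈ T <;> simp [hmem]
        · intro x _ hx
          rw [E'_one m ε h0, E'_one m ε h0]
          simp [hx]
      have hexp : (1:ℝ) - (↑((0:ℕ)+1):ℝ) = 0 := by norm_num
      rw [hS1, hQ1, hexp, Real.rpow_zero, one_mul]
      by_cases hmem : ((1,1):ℤ×ℤ) ∈ T
      · rw [if_pos hmem, if_pos hmem]; ring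
      · rw [if_neg hmem, if_neg hmem]; ring
    · -- inductive step : n ≥ 1
      have hn1 : 1 ≤ n := by omega
      have IH := ih hn1
      have hsplit : T.filter (fun p => p.2 ≤ (↑(n+1):ℤ))
          = T.filter (fun p => p.2 ≤ (n:ℤ)) ∪ T.filter (fun p => p.2 = (↑(n+1):ℤ)) := by
        ext p
        simp only [Finset.mem_filter, Finset.mem_union]
        constructor
        · rintro ⟨hp, hle⟩
          by_cases hc : p.2 ≤ (n:ℤ)
          · exact Or.inl ⟨hp, hc⟩
          · exact Or.inr ⟨hp, by push_cast at hle ⊢; omega⟩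
        · rintro (⟨hp, hle⟩ | ⟨hp, heq⟩)
          · exact ⟨hp, by push_cast at hle ⊢; omega⟩
          · exact ⟨hp, by push_cast at heq ⊢; omega⟩
      have hdisj : Disjoint (T.filter (fun p => p.2 ≤ (n:ℤ)))
          (T.filter (fun p => p.2 = (↑(n+1):ℤ))) := by
        rw [Finset.disjoint_left]
        intro p hp hp'
        simp only [Finset.mem_filter] at hp hp'
        have := hp.2
        rw [hp'.2] at this
        push_cast at this
        omega
      rw [hsplit, Finset.sum_union hdisj, absorbed_eq m ε T n]
      have hc2 : ((1 + m^2*ε^2) ^ ((1-(↑(n+1):ℝ))/2))^2 = (1 + m^2*ε^2) ^ (1-(↑(n+1):ℝ)) := by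
        rw [← Real.rpow_natCast ((1 + m^2*ε^2) ^ ((1-(↑(n+1):ℝ))/2)) 2, ← Real.rpow_mul hK.le]
        congr 1
        push_cast
        ring
      rw [hc2]
      have harr : (1 + m^2*ε^2) ^ (1-(↑(n+1):ℝ)) *
            (∑ x ∈ Finset.Icc (-(↑(n+1):ℤ)) (↑(n+1):ℤ),
              (if (x, (↑(n+1):ℤ)) ∈ T then
                ‖E' m ε T (n+1) x true‖ ^ 2 + ‖E' m ε T (n+1) x false‖ ^ 2
              else 0))
          + (1 + m^2*ε^2) ^ (1-(↑(n+1):ℝ)) * Qq m ε T (n+1)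
          = (1 + m^2*ε^2) ^ (1-(n:ℝ)) * Qq m ε T n := by
        rw [← mul_add, add_comm _ (Qq m ε T (n+1)), absorb_split m ε T n, step_sum m ε T hn1, ← mul_assoc]
        congr 1
        rw [← Real.rpow_add_one hK.ne']
        congr 1
        push_cast
        ring
      calc ∑ p ∈ T.filter (fun p => p.2 ≤ (n:ℤ)),
            ‖fcAmpBypass m ε (↑(T.erase p)) p.1 p.2.toNat‖ ^ 2
          + (1 + m^2*ε^2) ^ (1-(↑(n+1):ℝ)) *
            (∑ x ∈ Finset.Icc (-(↑(n+1):ℤ)) (↑(n+1):ℤ),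
              (if (x, (↑(n+1):ℤ)) ∈ T then
                ‖E' m ε T (n+1) x true‖ ^ 2 + ‖E' m ε T (n+1) x false‖ ^ 2
              else 0))
          + (1 + m^2*ε^2) ^ (1-(↑(n+1):ℝ)) * Qq m ε T (n+1)
          = ∑ p ∈ T.filter (fun p => p.2 ≤ (n:ℤ)),
            ‖fcAmpBypass m ε (↑(T.erase p)) p.1 p.2.toNat‖ ^ 2
            + (1 + m^2*ε^2) ^ (1-(n:ℝ)) * Qq m ε T n := by
            rw [add_assoc, harr]
        _ = 1 := IH

end FC

/-- Generalized probability conservation law: if `T ⊂ εℤ²` is a finite set such that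
every infinite checker path starting from `(0,0)` with first step to `(ε,ε)` passes
through some point of `T`, then `Σ_{(x,t)∈T} P(x,t bypass T∖{(x,t)}; m,ε) = 1`. -/
theorem stmt11 (m ε : ℝ) (hε : 0 < ε) (hm : 0 ≤ m) (T : Finset (ℤ × ℤ))
    (hposT : ∀ p ∈ T, 0 < p.2)
    (hhit : ∀ g : ℕ → Bool, g 0 = true → ∃ i : ℕ, (fcPosInf g i, (i : ℤ)) ∈ T) :
    ∑ p ∈ T, ‖
        fcAmpBypass m ε (↑(T.erase p)) p.1 p.2.toNat‖ ^ 2 = 1 := by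
  classical
  have h0 : ((0:ℤ),(0:ℤ)) ∉ T := fun h => absurd (hposT _ h) (lt_irrefl 0)
  obtain ⟨i0, hi0⟩ := hhit (fun _ => true) rfl
  have hTne : T.Nonempty := ⟨_, hi0⟩
  set N := T.sup (fun p => p.2.toNat) with hN
  have hposmem : ∀ p ∈ T, p.2 ≤ (N:ℤ) := by
    intro p hp
    have h1 : p.2.toNat ≤ N := Finset.le_sup (f := fun p => p.2.toNat) hp
    have h2 : 0 ≤ p.2 := le_of_lt (hposT p hp)
    omega
  have hN1 : 1 ≤ N := by
    obtain ⟨p, hp⟩ := hTne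
    have hppos := hposT p hp
    have h1 : p.2.toNat ≤ N := Finset.le_sup (f := fun p => p.2.toNat) hp
    omega
  have hAempty : ∀ (x : ℤ) (b : Bool), FC.Aset T N x b = ∅ := by
    intro x b
    apply Finset.eq_empty_of_forall_notMem
    intro f hf
    simp only [FC.Aset, Finset.mem_filter, Finset.mem_univ, true_and] at hf
    obtain ⟨h1, h2, _, _⟩ := hf
    obtain ⟨i, hi⟩ := hhit (fcStep f) h1
    have hpos : fcPosInf (fcStep f) i = fcPos f i := rfl
    rw [hpos] at hi
    have hile : i ≤ N := by
      have hh := hposmem _ hi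
      simp only at hh
      exact_mod_cast hh
    exact h2 i hile hi
  have hQ : FC.Qq m ε T N = 0 := by
    rw [FC.Qq]
    apply Finset.sum_eq_zero
    intro x _
    rw [FC.E, FC.E, hAempty x true, hAempty x false, Finset.sum_empty]
    simp
  have hInv := FC.invariant m ε T hposT h0 hN1
  have hfe : T.filter (fun p => p.2 ≤ (N:ℤ)) = T := Finset.filter_true_of_mem hposmem
  rw [hfe, hQ, mul_zero, add_zero] at hInv
  exact hInv
end
end

section
/- For every ε > 0, m ≥ 0, and (x,t) ∈ εℤ² with t ≥ 2ε: (1) a₁(x,t,m,ε) = (1/√(1+m²ε²))·(a₁(x+ε,t−ε,m,ε) + mε·a₂(x+ε,t−ε,m,ε)); and (2) a₂(x,t,m,ε) = (1/√(1+m²ε²))·(a₂(x−ε,t−ε,m,ε) − mε·a₁(x−ε,t−ε,m,ε)). -/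
noncomputable section

namespace FcAux

variable {k : ℕ}

def ext (g : Fin (k+1) → Bool) (b : Bool) : Fin (k+2) → Bool :=
  fun i => if h : (i : ℕ) < k + 1 then g ⟨i, h⟩ else b

def init (f : Fin (k+2) → Bool) : Fin (k+1) → Bool :=
  fun i => f ⟨i, by omega⟩

lemma fcStep_ext_lt (g : Fin (k+1) → Bool) (b : Bool) {i : ℕ} (h : i < k+1) :
    fcStep (ext g b) i = fcStep g i := by
  unfold fcStep ext
  rw [dif_pos (Nat.lt_succ_of_lt h), dif_pos h, dif_pos h]

lemma fcStep_ext_last (g : Fin (k+1) → Bool) (b : Bool) :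
    fcStep (ext g b) (k+1) = b := by
  unfold fcStep ext
  rw [dif_pos (by omega : k + 1 < k + 2)]
  simp

lemma fcStep_init (f : Fin (k+2) → Bool) {i : ℕ} (h : i < k+1) :
    fcStep (init f) i = fcStep f i := by
  unfold fcStep init
  rw [dif_pos h, dif_pos (by omega : i < k + 2)]

lemma init_ext (g : Fin (k+1) → Bool) (b : Bool) : init (ext g b) = g := by
  funext i
  unfold init ext
  rw [dif_pos i.isLt]

lemma ext_init (f : Fin (k+2) → Bool) (b : Bool) (hb : fcStep f (k+1) = b) :
    ext (init f) b = f := by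
  funext i
  unfold ext init
  by_cases h : (i : ℕ) < k + 1
  · rw [dif_pos h]
  · rw [dif_neg h]
    have hi : (i : ℕ) = k + 1 := by omega
    unfold fcStep at hb
    rw [dif_pos (by omega : k + 1 < k + 2)] at hb
    rw [← hb]
    congr 1
    exact Fin.ext hi.symm

lemma fcPos_ext (g : Fin (k+1) → Bool) (b : Bool) :
    fcPos (ext g b) (k+2) = fcPos g (k+1) + (if b then 1 else -1) := by
  unfold fcPos
  rw [Finset.sum_range_succ, fcStep_ext_last]
  congr 1
  apply Finset.sum_congr rfl
  intro j hj
  rw [fcStep_ext_lt g b (Finset.mem_range.mp hj)]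

lemma fcPos_init (f : Fin (k+2) → Bool) :
    fcPos f (k+2) = fcPos (init f) (k+1) + (if fcStep f (k+1) then 1 else -1) := by
  unfold fcPos
  rw [Finset.sum_range_succ]
  congr 1
  apply Finset.sum_congr rfl
  intro j hj
  rw [fcStep_init f (Finset.mem_range.mp hj)]

lemma fcTurns_ext (g : Fin (k+1) → Bool) (b : Bool) :
    fcTurns (ext g b) = fcTurns g + (if fcStep g k = b then 0 else 1) := by
  unfold fcTurns
  have h1 : k + 2 - 1 = k + 1 := rfl
  have h2 : k + 1 - 1 = k := rfl
  rw [h1, h2, Finset.range_add_one, Finset.filter_insert]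
  have hfilter : (Finset.range k).filter
      (fun i => fcStep (ext g b) i ≠ fcStep (ext g b) (i+1))
      = (Finset.range k).filter (fun i => fcStep g i ≠ fcStep g (i+1)) := by
    apply Finset.filter_congr
    intro i hi
    have hi' : i < k := Finset.mem_range.mp hi
    rw [fcStep_ext_lt g b (by omega), fcStep_ext_lt g b (by omega)]
  rw [fcStep_ext_lt g b (by omega : k < k + 1), fcStep_ext_last]
  by_cases hc : fcStep g k = b
  · rw [if_neg (by simp [hc]), hfilter, if_pos hc]
    rfl
  · rw [if_pos hc, hfilter, if_neg hc,
      Finset.card_insert_of_notMem (by simp)]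

lemma mem_fcPaths {n : ℕ} {x : ℤ} {f : Fin n → Bool} :
    f ∈ fcPaths n x ↔ (∀ i : Fin n, (i : ℕ) = 0 → f i = true) ∧ fcPos f n = x := by
  simp [fcPaths]

lemma ext_mem {y : ℤ} {g : Fin (k+1) → Bool} (hg : g ∈ fcPaths (k+1) y) (b : Bool) :
    ext g b ∈ fcPaths (k+2) (y + (if b then 1 else -1)) := by
  rw [mem_fcPaths] at hg ⊢
  constructor
  · intro i hi
    have h0 : (i : ℕ) < k + 1 := by omega
    show (if h : (i : ℕ) < k + 1 then g ⟨i, h⟩ else b) = true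
    rw [dif_pos h0]
    exact hg.1 ⟨(i : ℕ), h0⟩ hi
  · rw [fcPos_ext, hg.2]

lemma init_mem {X : ℤ} {f : Fin (k+2) → Bool} (hf : f ∈ fcPaths (k+2) X) (b : Bool)
    (hb : fcStep f (k+1) = b) :
    init f ∈ fcPaths (k+1) (X - (if b then 1 else -1)) := by
  rw [mem_fcPaths] at hf ⊢
  constructor
  · intro i hi
    show f ⟨(i : ℕ), by omega⟩ = true
    exact hf.1 ⟨(i : ℕ), by omega⟩ hi
  · have := fcPos_init f
    rw [hf.2] at this
    rw [hb] at this
    omega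

end FcAux


namespace FcAux

lemma sum_split (z : ℂ) (k : ℕ) (X : ℤ) :
    ∑ f ∈ fcPaths (k+2) X, z ^ fcTurns f
      = (∑ g ∈ fcPaths (k+1) (X-1),
          z ^ (fcTurns g + if fcStep g k = true then 0 else 1))
      + (∑ g ∈ fcPaths (k+1) (X+1),
          z ^ (fcTurns g + if fcStep g k = false then 0 else 1)) := by
  classical
  rw [← Finset.sum_filter_add_sum_filter_not (fcPaths (k+2) X)
    (fun f => fcStep f (k+1) = true)]
  congr 1
  · apply Finset.sum_nbij' (i := fun f => init f) (j := fun g => ext g true)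
    · intro f hf
      rw [Finset.mem_filter] at hf
      have := init_mem hf.1 true hf.2
      simpa using this
    · intro g hg
      rw [Finset.mem_filter]
      constructor
      · have h := ext_mem hg true
        rw [show (X - 1) + (if (true : Bool) then (1:ℤ) else -1) = X by simp] at h
        exact h
      · exact fcStep_ext_last g true
    · intro f hf
      rw [Finset.mem_filter] at hf
      exact ext_init f true hf.2
    · intro g hg
      exact init_ext g true
    · intro f hf
      rw [Finset.mem_filter] at hf
      conv_lhs => rw [← ext_init f true hf.2]
      rw [fcTurns_ext, fcStep_init f (by omega : k < k + 1)]
  · apply Finset.sum_nbij' (i := fun f => init f) (j := fun g => ext g false)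
    · intro f hf
      rw [Finset.mem_filter] at hf
      have hb : fcStep f (k+1) = false := by
        cases h : fcStep f (k+1)
        · rfl
        · exact absurd h hf.2
      have := init_mem hf.1 false hb
      simpa using this
    · intro g hg
      rw [Finset.mem_filter]
      constructor
      · have h := ext_mem hg false
        rw [show (X + 1) + (if (false : Bool) then (1:ℤ) else -1) = X by simp] at h
        exact h
      · simp [fcStep_ext_last g false]
    · intro f hf
      rw [Finset.mem_filter] at hf
      have hb : fcStep f (k+1) = false := by
        cases h : fcStep f (k+1)
        · rfl
        · exact absurd h hf.2
      exact ext_init f false hb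
    · intro g hg
      exact init_ext g false
    · intro f hf
      rw [Finset.mem_filter] at hf
      have hb : fcStep f (k+1) = false := by
        cases h : fcStep f (k+1)
        · rfl
        · exact absurd h hf.2
      conv_lhs => rw [← ext_init f false hb]
      rw [fcTurns_ext, fcStep_init f (by omega : k < k + 1)]

lemma changes_parity (s : ℕ → Bool) :
    ∀ l, ((Finset.range l).filter fun i => s i ≠ s (i+1)).card % 2
      = if s 0 = s l then 0 else 1 := by
  intro l
  induction l with
  | zero => simp
  | succ l ih =>
    rw [Finset.range_add_one, Finset.filter_insert]
    by_cases hc : s l = s (l+1)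
    · rw [if_neg (by simp [hc]), ih, hc]
    · rw [if_pos hc, Finset.card_insert_of_notMem (by simp)]
      cases hb0 : s 0 <;> cases hbl : s l <;> cases hbl1 : s (l+1) <;>
        simp_all <;> omega

lemma turns_parity {y : ℤ} {k : ℕ} {g : Fin (k+1) → Bool} (hg : g ∈ fcPaths (k+1) y) :
    fcTurns g % 2 = if fcStep g k = true then 0 else 1 := by
  rw [mem_fcPaths] at hg
  have h0 : fcStep g 0 = true := by
    unfold fcStep
    rw [dif_pos (by omega : 0 < k + 1)]
    exact hg.1 ⟨0, by omega⟩ rfl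
  have := changes_parity (fcStep g) k
  unfold fcTurns
  have hk : k + 1 - 1 = k := rfl
  rw [hk, this, h0]
  cases h : fcStep g k <;> simp

end FcAux


namespace FcAux

section ZLemmas

variable {z : ℂ} {c : ℝ} (hz : z = -Complex.I * c)

include hz

lemma z_sq : z ^ 2 = ((-(c^2) : ℝ) : ℂ) := by
  rw [hz]
  push_cast
  ring_nf
  rw [Complex.I_sq]
  ring

lemma pow_even_im {t : ℕ} (h : t % 2 = 0) : (z ^ t).im = 0 := by
  obtain ⟨l, rfl⟩ : ∃ l, t = 2 * l := ⟨t / 2, by omega⟩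
  rw [pow_mul, z_sq hz, ← Complex.ofReal_pow]
  exact Complex.ofReal_im _

lemma pow_odd_re {t : ℕ} (h : t % 2 = 1) : (z ^ t).re = 0 := by
  obtain ⟨l, rfl⟩ : ∃ l, t = 2 * l + 1 := ⟨t / 2, by omega⟩
  rw [pow_succ, pow_mul, z_sq hz, ← Complex.ofReal_pow, Complex.mul_re,
    Complex.ofReal_re, Complex.ofReal_im, hz]
  simp

lemma z_mul_re (w : ℂ) : (z * w).re = c * w.im := by
  rw [hz]; simp [Complex.mul_re]

lemma z_mul_im (w : ℂ) : (z * w).im = -(c * w.re) := by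
  rw [hz]; simp [Complex.mul_im]

lemma key_re (b : Bool) (t : ℕ) (h : t % 2 = if b = true then 0 else 1) :
    (z ^ (t + if b = true then 0 else 1)).re = (z ^ t).re + c * (z ^ t).im := by
  cases b
  · simp only [Bool.false_eq_true, if_false, eq_self_iff_true, if_true] at h ⊢
    rw [pow_succ, mul_comm, z_mul_re hz, pow_odd_re hz h]
    ring
  · simp only [Bool.false_eq_true, if_false, eq_self_iff_true, if_true] at h ⊢
    rw [add_zero, pow_even_im hz h]
    ring

lemma key_im1 (b : Bool) (t : ℕ) (h : t % 2 = if b = true then 0 else 1) :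
    (z ^ (t + if b = true then 0 else 1)).im = 0 := by
  cases b
  · simp only [Bool.false_eq_true, if_false, eq_self_iff_true, if_true] at h ⊢
    exact pow_even_im hz (by omega)
  · simp only [Bool.false_eq_true, if_false, eq_self_iff_true, if_true] at h ⊢
    rw [add_zero]
    exact pow_even_im hz h

lemma key_re2 (b : Bool) (t : ℕ) (h : t % 2 = if b = true then 0 else 1) :
    (z ^ (t + if b = false then 0 else 1)).re = 0 := by
  cases b
  · simp only [Bool.false_eq_true, Bool.true_eq_false, if_false, eq_self_iff_true, if_true] at h ⊢
    rw [add_zero]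
    exact pow_odd_re hz h
  · simp only [Bool.false_eq_true, Bool.true_eq_false, if_false, eq_self_iff_true, if_true] at h ⊢
    exact pow_odd_re hz (by omega)

lemma key_im2 (b : Bool) (t : ℕ) (h : t % 2 = if b = true then 0 else 1) :
    (z ^ (t + if b = false then 0 else 1)).im = (z ^ t).im - c * (z ^ t).re := by
  cases b
  · simp only [Bool.false_eq_true, Bool.true_eq_false, if_false, eq_self_iff_true, if_true] at h ⊢
    rw [add_zero, pow_odd_re hz h]
    ring
  · simp only [Bool.false_eq_true, Bool.true_eq_false, if_false, eq_self_iff_true, if_true] at h ⊢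
    rw [pow_succ, mul_comm, z_mul_im hz, pow_even_im hz h]
    ring

lemma S_re (k : ℕ) (X : ℤ) :
    (∑ f ∈ fcPaths (k+2) X, z ^ fcTurns f).re
      = (∑ g ∈ fcPaths (k+1) (X-1), z ^ fcTurns g).re
        + c * (∑ g ∈ fcPaths (k+1) (X-1), z ^ fcTurns g).im := by
  rw [sum_split z k X, Complex.add_re, Complex.re_sum, Complex.re_sum,
    Complex.re_sum, Complex.im_sum]
  rw [Finset.sum_congr rfl
      (fun g hg => key_re hz (fcStep g k) (fcTurns g) (turns_parity hg)),
    Finset.sum_eq_zero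
      (fun g hg => key_re2 hz (fcStep g k) (fcTurns g) (turns_parity hg)),
    add_zero, Finset.sum_add_distrib, ← Finset.mul_sum]

lemma S_im (k : ℕ) (X : ℤ) :
    (∑ f ∈ fcPaths (k+2) X, z ^ fcTurns f).im
      = (∑ g ∈ fcPaths (k+1) (X+1), z ^ fcTurns g).im
        - c * (∑ g ∈ fcPaths (k+1) (X+1), z ^ fcTurns g).re := by
  rw [sum_split z k X, Complex.add_im, Complex.im_sum, Complex.im_sum,
    Complex.im_sum, Complex.re_sum]
  rw [Finset.sum_eq_zero
      (fun g hg => key_im1 hz (fcStep g k) (fcTurns g) (turns_parity hg)),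
    Finset.sum_congr rfl
      (fun g hg => key_im2 hz (fcStep g k) (fcTurns g) (turns_parity hg)),
    zero_add, Finset.sum_sub_distrib, ← Finset.mul_sum]

end ZLemmas

end FcAux


namespace FcAux

lemma amp_re (m ε : ℝ) (x : ℤ) (n : ℕ) :
    (fcAmp m ε x n).re = -((1 + m ^ 2 * ε ^ 2) ^ ((1 - (n : ℝ)) / 2))
      * (∑ f ∈ fcPaths n x, (-Complex.I * ((m : ℂ) * ε)) ^ fcTurns f).im := by
  unfold fcAmp
  set w := ∑ f ∈ fcPaths n x, (-Complex.I * ((m : ℂ) * ε)) ^ fcTurns f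
  simp [Complex.mul_re, Complex.mul_im]

lemma amp_im (m ε : ℝ) (x : ℤ) (n : ℕ) :
    (fcAmp m ε x n).im = ((1 + m ^ 2 * ε ^ 2) ^ ((1 - (n : ℝ)) / 2))
      * (∑ f ∈ fcPaths n x, (-Complex.I * ((m : ℂ) * ε)) ^ fcTurns f).re := by
  unfold fcAmp
  set w := ∑ f ∈ fcPaths n x, (-Complex.I * ((m : ℂ) * ε)) ^ fcTurns f
  simp [Complex.mul_re, Complex.mul_im]

end FcAux

open FcAux

/-- Dirac equation: for a lattice point `(x,t) = (εX, εn)` with `t ≥ 2ε`. -/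
theorem stmt13 (m ε : ℝ) (hε : 0 < ε) (hm : 0 ≤ m) (X : ℤ) (n : ℕ) (hn : 2 ≤ n) :
    (fcAmp m ε X n).re
        = (1 / Real.sqrt (1 + m ^ 2 * ε ^ 2)) *
            ((fcAmp m ε (X + 1) (n - 1)).re + m * ε * (fcAmp m ε (X + 1) (n - 1)).im) ∧
    (fcAmp m ε X n).im
        = (1 / Real.sqrt (1 + m ^ 2 * ε ^ 2)) *
            ((fcAmp m ε (X - 1) (n - 1)).im - m * ε * (fcAmp m ε (X - 1) (n - 1)).re)
    := by
  have hA : (0:ℝ) < 1 + m ^ 2 * ε ^ 2 := by positivity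
  have hs : (0:ℝ) < Real.sqrt (1 + m ^ 2 * ε ^ 2) := Real.sqrt_pos.mpr hA
  obtain ⟨k, rfl⟩ : ∃ k, n = k + 2 := ⟨n - 2, by omega⟩
  have hsub : (k + 2) - 1 = k + 1 := rfl
  have hz : (-Complex.I * ((m : ℂ) * ε)) = -Complex.I * ((m * ε : ℝ) : ℂ) := by
    push_cast; ring
  have hcr : ((1 + m ^ 2 * ε ^ 2 : ℝ) ^ ((1 - ((k + 2 : ℕ) : ℝ)) / 2))
      = ((1 + m ^ 2 * ε ^ 2 : ℝ) ^ ((1 - ((k + 1 : ℕ) : ℝ)) / 2))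
        / Real.sqrt (1 + m ^ 2 * ε ^ 2) := by
    rw [show ((1 - ((k + 2 : ℕ) : ℝ)) / 2) = ((1 - ((k + 1 : ℕ) : ℝ)) / 2) - 1 / 2 by
        push_cast; ring,
      Real.rpow_sub hA, Real.sqrt_eq_rpow]
  constructor
  · rw [hsub, amp_re m ε X (k + 2), amp_re m ε (X + 1) (k + 1),
      amp_im m ε (X + 1) (k + 1), S_im hz k X, hcr]
    field_simp
    ring
  · rw [hsub, amp_im m ε X (k + 2), amp_im m ε (X - 1) (k + 1),
      amp_re m ε (X - 1) (k + 1), S_re hz k X, hcr]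
    field_simp
    ring
end
end

section
/- For every ε > 0, m ≥ 0, and (x,t) ∈ εℤ² with t ≥ 2ε: (1) a₁(x,t−ε,m,ε) = (1/√(1+m²ε²))·(a₁(x−ε,t,m,ε) − mε·a₂(x+ε,t,m,ε)); and (2) a₂(x,t−ε,m,ε) = (1/√(1+m²ε²))·(a₂(x+ε,t,m,ε) + mε·a₁(x−ε,t,m,ε)). -/
noncomputable section

namespace Stmt14

lemma fcStep_snoc {k : ℕ} (g : Fin k → Bool) (b : Bool) (i : ℕ) :
    fcStep (Fin.snoc g b) i =
      if h : i < k then fcStep g i else if i = k then b else true := by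
  unfold fcStep
  rcases lt_trichotomy i k with h | h | h
  · rw [dif_pos h, dif_pos (h.trans (Nat.lt_succ_self k)), dif_pos h]
    have : (⟨i, h.trans (Nat.lt_succ_self k)⟩ : Fin (k+1)) = Fin.castSucc ⟨i, h⟩ := rfl
    rw [this, Fin.snoc_castSucc]
  · subst h
    rw [dif_pos (Nat.lt_succ_self i), dif_neg (lt_irrefl i), if_pos rfl]
    have : (⟨i, Nat.lt_succ_self i⟩ : Fin (i+1)) = Fin.last i := rfl
    rw [this, Fin.snoc_last]
  · rw [dif_neg (by omega), dif_neg (by omega), if_neg (by omega)]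

lemma fcPos_snoc {k : ℕ} (g : Fin k → Bool) (b : Bool) {j : ℕ} (hj : j ≤ k) :
    fcPos (Fin.snoc g b) j = fcPos g j := by
  unfold fcPos
  apply Finset.sum_congr rfl
  intro i hi
  rw [Finset.mem_range] at hi
  rw [fcStep_snoc, dif_pos (by omega)]

lemma fcPos_snoc_top {k : ℕ} (g : Fin k → Bool) (b : Bool) :
    fcPos (Fin.snoc g b) (k+1) = fcPos g k + (if b then 1 else -1) := by
  unfold fcPos
  rw [Finset.sum_range_succ]
  congr 1
  · exact fcPos_snoc g b le_rfl
  · rw [fcStep_snoc, dif_neg (lt_irrefl k), if_pos rfl]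

lemma fcTurns_snoc {k : ℕ} (hk : 1 ≤ k) (g : Fin k → Bool) (b : Bool) :
    fcTurns (Fin.snoc g b) = fcTurns g + (if fcStep g (k-1) ≠ b then 1 else 0) := by
  obtain ⟨j, rfl⟩ : ∃ j, k = j + 1 := ⟨k - 1, by omega⟩
  unfold fcTurns
  have h1 : (j + 1 + 1 - 1) = j + 1 := rfl
  have h2 : (j + 1 - 1) = j := rfl
  rw [h1, h2, Finset.range_add_one, Finset.filter_insert]
  have hstep : ∀ i < j + 1, fcStep (Fin.snoc g b) i = fcStep g i := by
    intro i hi; rw [fcStep_snoc, dif_pos hi]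
  have hcongr : ((Finset.range j).filter fun i =>
      fcStep (Fin.snoc g b) i ≠ fcStep (Fin.snoc g b) (i + 1)) =
      (Finset.range j).filter fun i => fcStep g i ≠ fcStep g (i + 1) := by
    apply Finset.filter_congr
    intro i hi
    rw [Finset.mem_range] at hi
    rw [hstep i (by omega), hstep (i+1) (by omega)]
  have hlast : fcStep (Fin.snoc g b) (j+1) = b := by
    rw [fcStep_snoc, dif_neg (lt_irrefl _), if_pos rfl]
  by_cases h : fcStep g j ≠ b
  · rw [if_pos (by rw [hstep j (by omega), hlast]; exact h), hcongr,
      Finset.card_insert_of_notMem (by simp), if_pos h]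
  · rw [if_neg (by rw [hstep j (by omega), hlast]; exact h), hcongr, if_neg h]
    omega

lemma even_changes (s : ℕ → Bool) (k : ℕ) :
    Even ((Finset.range k).filter fun i => s i ≠ s (i+1)).card ↔ s 0 = s k := by
  induction k with
  | zero => simp
  | succ k ih =>
    rw [Finset.range_add_one, Finset.filter_insert]
    by_cases h : s k ≠ s (k+1)
    · rw [if_pos h, Finset.card_insert_of_notMem (by simp), Nat.even_add_one, ih]
      cases hs : s 0 <;> cases h1 : s k <;> cases h2 : s (k+1) <;> simp_all
    · rw [if_neg h, ih]
      simp only [ne_eq, not_not] at h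
      rw [h]


def ci (m ε : ℝ) : ℂ := -Complex.I * (m * ε)

def SA (m ε : ℝ) (n : ℕ) (x : ℤ) : ℂ :=
  ∑ f ∈ (fcPaths n x).filter (fun f => fcStep f (n-1) = true), ci m ε ^ fcTurns f

def SB (m ε : ℝ) (n : ℕ) (x : ℤ) : ℂ :=
  ∑ f ∈ (fcPaths n x).filter (fun f => fcStep f (n-1) = false), ci m ε ^ fcTurns f

lemma mem_fcPaths {n : ℕ} {x : ℤ} {f : Fin n → Bool} :
    f ∈ fcPaths n x ↔ (∀ i : Fin n, (i : ℕ) = 0 → f i = true) ∧ fcPos f n = x := by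
  simp [fcPaths]

/-- Sum over paths of length `k+1` with prescribed last step, rewritten as a sum
over paths of length `k`. -/
lemma sum_snoc {k : ℕ} (hk : 1 ≤ k) (x : ℤ) (b : Bool) (F : ℕ → ℂ) :
    ∑ f ∈ (fcPaths (k+1) x).filter (fun f => fcStep f k = b), F (fcTurns f)
      = ∑ g ∈ fcPaths k (x - (if b then 1 else -1)),
          F (fcTurns g + (if fcStep g (k-1) ≠ b then 1 else 0)) := by
  apply Finset.sum_nbij' (fun f => Fin.init f) (fun g => Fin.snoc g b)
  · intro f hf
    rw [Finset.mem_filter, mem_fcPaths] at hf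
    obtain ⟨⟨h0, hpos⟩, hlast⟩ := hf
    have hsnoc : Fin.snoc (Fin.init f) b = f := by
      rw [← hlast]
      have : fcStep f k = f (Fin.last k) := by
        unfold fcStep; rw [dif_pos (Nat.lt_succ_self k)]; rfl
      rw [this]
      exact Fin.snoc_init_self f
    rw [mem_fcPaths]
    constructor
    · intro i hi
      have := h0 (Fin.castSucc i) (by simpa using hi)
      simpa [Fin.init] using this
    · have := fcPos_snoc (Fin.init f) b (le_rfl : k ≤ k)
      rw [hsnoc] at this
      have htop := fcPos_snoc_top (Fin.init f) b
      rw [hsnoc] at htop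
      omega
  · intro g hg
    rw [mem_fcPaths] at hg
    obtain ⟨h0, hpos⟩ := hg
    rw [Finset.mem_filter, mem_fcPaths]
    refine ⟨⟨?_, ?_⟩, ?_⟩
    · intro i hi
      have hik : (i : ℕ) < k := by omega
      have : (Fin.snoc g b : Fin (k+1) → Bool) i = g (i.castLT hik) := by
        simp [Fin.snoc, hik]
      rw [this]
      exact h0 _ hi
    · rw [fcPos_snoc_top, hpos]; omega
    · rw [fcStep_snoc, dif_neg (lt_irrefl k), if_pos rfl]
  · intro f hf
    rw [Finset.mem_filter, mem_fcPaths] at hf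
    have : fcStep f k = f (Fin.last k) := by
      unfold fcStep; rw [dif_pos (Nat.lt_succ_self k)]; rfl
    rw [← hf.2, this]
    exact Fin.snoc_init_self f
  · intro g hg
    simp
  · intro f hf
    rw [Finset.mem_filter, mem_fcPaths] at hf
    have hsnoc : Fin.snoc (Fin.init f) b = f := by
      rw [← hf.2]
      have : fcStep f k = f (Fin.last k) := by
        unfold fcStep; rw [dif_pos (Nat.lt_succ_self k)]; rfl
      rw [this]
      exact Fin.snoc_init_self f
    have := fcTurns_snoc hk (Fin.init f) b
    rw [hsnoc] at this
    rw [this]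

lemma SA_rec (m ε : ℝ) {k : ℕ} (hk : 1 ≤ k) (x : ℤ) :
    SA m ε (k+1) x = SA m ε k (x-1) + ci m ε * SB m ε k (x-1) := by
  unfold SA
  have h1 : (k + 1 - 1) = k := rfl
  rw [h1, sum_snoc hk x true]
  have hx : (x - if (true : Bool) = true then (1:ℤ) else -1) = x - 1 := by norm_num
  rw [hx]
  rw [← Finset.sum_filter_add_sum_filter_not (fcPaths k (x-1))
    (fun g => fcStep g (k-1) = true)]
  congr 1
  · apply Finset.sum_congr rfl
    intro g hg
    rw [Finset.mem_filter] at hg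
    rw [if_neg (by simp [hg.2]), add_zero]
  · rw [SB, Finset.mul_sum]
    have : (fcPaths k (x-1)).filter (fun g => ¬ fcStep g (k-1) = true)
        = (fcPaths k (x-1)).filter (fun g => fcStep g (k-1) = false) := by
      apply Finset.filter_congr; intro g _; simp
    rw [← this]
    apply Finset.sum_congr rfl
    intro g hg
    rw [Finset.mem_filter] at hg
    rw [if_pos (by simp [hg.2]), pow_succ]
    ring

lemma SB_rec (m ε : ℝ) {k : ℕ} (hk : 1 ≤ k) (x : ℤ) :
    SB m ε (k+1) x = SB m ε k (x+1) + ci m ε * SA m ε k (x+1) := by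
  unfold SB
  have h1 : (k + 1 - 1) = k := rfl
  rw [h1, sum_snoc hk x false]
  have hx : (x - if (false : Bool) = true then (1:ℤ) else -1) = x + 1 := by norm_num
  rw [hx]
  rw [← Finset.sum_filter_add_sum_filter_not (fcPaths k (x+1))
    (fun g => fcStep g (k-1) = false)]
  congr 1
  · apply Finset.sum_congr rfl
    intro g hg
    rw [Finset.mem_filter] at hg
    rw [if_neg (by simp [hg.2]), add_zero]
  · rw [SA, Finset.mul_sum]
    have : (fcPaths k (x+1)).filter (fun g => ¬ fcStep g (k-1) = false)
        = (fcPaths k (x+1)).filter (fun g => fcStep g (k-1) = true) := by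
      apply Finset.filter_congr; intro g _; simp
    rw [← this]
    apply Finset.sum_congr rfl
    intro g hg
    rw [Finset.mem_filter] at hg
    rw [if_pos (by simp [hg.2]), pow_succ]
    ring


lemma ci_re (m ε : ℝ) : (ci m ε).re = 0 := by simp [ci]

lemma ci_im (m ε : ℝ) : (ci m ε).im = -(m * ε) := by simp [ci]

lemma ci_sq (m ε : ℝ) : ci m ε ^ 2 = ((-((m * ε) ^ 2) : ℝ) : ℂ) := by
  unfold ci
  push_cast
  ring_nf
  simp [Complex.I_sq]

lemma fcStep_zero_of_mem {n : ℕ} (hn : 1 ≤ n) {x : ℤ} {f : Fin n → Bool}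
    (hf : f ∈ fcPaths n x) : fcStep f 0 = true := by
  rw [mem_fcPaths] at hf
  unfold fcStep
  rw [dif_pos (by omega)]
  exact hf.1 _ rfl

lemma SA_im (m ε : ℝ) {n : ℕ} (hn : 1 ≤ n) (x : ℤ) : (SA m ε n x).im = 0 := by
  unfold SA
  rw [Complex.im_sum]
  apply Finset.sum_eq_zero
  intro f hf
  rw [Finset.mem_filter] at hf
  have heven : Even (fcTurns f) := by
    unfold fcTurns
    rw [even_changes (fcStep f) (n-1)]
    rw [fcStep_zero_of_mem hn hf.1, hf.2]
  obtain ⟨j, hj⟩ := heven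
  rw [hj, ← two_mul, pow_mul, ci_sq, ← Complex.ofReal_pow, Complex.ofReal_im]

lemma SB_re (m ε : ℝ) {n : ℕ} (hn : 1 ≤ n) (x : ℤ) : (SB m ε n x).re = 0 := by
  unfold SB
  rw [Complex.re_sum]
  apply Finset.sum_eq_zero
  intro f hf
  rw [Finset.mem_filter] at hf
  have hodd : ¬ Even (fcTurns f) := by
    unfold fcTurns
    rw [even_changes (fcStep f) (n-1)]
    rw [fcStep_zero_of_mem hn hf.1, hf.2]
    simp
  obtain ⟨j, hj⟩ : ∃ j, fcTurns f = 2 * j + 1 := by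
    rcases Nat.even_or_odd (fcTurns f) with h | h
    · exact absurd h hodd
    · exact h
  rw [hj, pow_succ, pow_mul, ci_sq, ← Complex.ofReal_pow]
  rw [Complex.mul_re, Complex.ofReal_re, Complex.ofReal_im, ci_re, ci_im]
  ring

lemma fcAmp_eq (m ε : ℝ) (x : ℤ) (n : ℕ) :
    fcAmp m ε x n = (((1 + m ^ 2 * ε ^ 2) ^ ((1 - (n : ℝ)) / 2) : ℝ) : ℂ) * Complex.I *
      (SA m ε n x + SB m ε n x) := by
  unfold fcAmp SA SB ci
  congr 1
  have h : (fcPaths n x).filter (fun f => fcStep f (n-1) = false)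
      = (fcPaths n x).filter (fun f => ¬ fcStep f (n-1) = true) := by
    apply Finset.filter_congr; intro g _; simp
  rw [h, Finset.sum_filter_add_sum_filter_not]

lemma fcAmp_re (m ε : ℝ) {n : ℕ} (hn : 1 ≤ n) (x : ℤ) :
    (fcAmp m ε x n).re
      = -((1 + m ^ 2 * ε ^ 2) ^ ((1 - (n : ℝ)) / 2) * (SB m ε n x).im) := by
  rw [fcAmp_eq]
  rw [Complex.mul_re, Complex.mul_re, Complex.mul_im]
  simp [Complex.add_im, SA_im m ε hn x]

lemma fcAmp_im (m ε : ℝ) {n : ℕ} (hn : 1 ≤ n) (x : ℤ) :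
    (fcAmp m ε x n).im
      = (1 + m ^ 2 * ε ^ 2) ^ ((1 - (n : ℝ)) / 2) * (SA m ε n x).re := by
  rw [fcAmp_eq]
  rw [Complex.mul_im, Complex.mul_re, Complex.mul_im]
  simp [Complex.add_re, SB_re m ε hn x]

lemma key (A : ℝ) (hA : 0 < A) (k : ℕ) :
    1 / Real.sqrt A * A ^ ((1 - ((k : ℝ) + 1)) / 2) * A = A ^ ((1 - (k : ℝ)) / 2) := by
  rw [Real.sqrt_eq_rpow, one_div, ← Real.rpow_neg hA.le]
  rw [← Real.rpow_add hA]
  nth_rewrite 2 [← Real.rpow_one A]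
  rw [← Real.rpow_add hA]
  congr 1
  ring

end Stmt14

open Stmt14

/-- Inverse Dirac equation: for a lattice point `(x,t) = (εX, εn)` with `t ≥ 2ε`. -/
theorem stmt14 (m ε : ℝ) (hε : 0 < ε) (hm : 0 ≤ m) (X : ℤ) (n : ℕ) (hn : 2 ≤ n) :
    (fcAmp m ε X (n - 1)).re
        = (1 / Real.sqrt (1 + m ^ 2 * ε ^ 2)) *
            ((fcAmp m ε (X - 1) n).re - m * ε * (fcAmp m ε (X + 1) n).im) ∧
    (fcAmp m ε X (n - 1)).im
        = (1 / Real.sqrt (1 + m ^ 2 * ε ^ 2)) *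
            ((fcAmp m ε (X + 1) n).im + m * ε * (fcAmp m ε (X - 1) n).re) := by
  obtain ⟨k, rfl⟩ : ∃ k, n = k + 1 := ⟨n - 1, by omega⟩
  have hk : 1 ≤ k := by omega
  have hA : (0 : ℝ) < 1 + m ^ 2 * ε ^ 2 := by positivity
  have e1 : (SB m ε (k+1) (X-1)).im = (SB m ε k X).im - m * ε * (SA m ε k X).re := by
    rw [SB_rec m ε hk, show X - 1 + 1 = X from by ring]
    rw [Complex.add_im, Complex.mul_im, ci_re, ci_im]
    ring
  have e2 : (SA m ε (k+1) (X+1)).re = (SA m ε k X).re + m * ε * (SB m ε k X).im := by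
    rw [SA_rec m ε hk, show X + 1 - 1 = X from by ring]
    rw [Complex.add_re, Complex.mul_re, ci_re, ci_im]
    ring
  have hkey := key (1 + m ^ 2 * ε ^ 2) hA k
  rw [show k + 1 - 1 = k from rfl]
  rw [fcAmp_re m ε hk X, fcAmp_im m ε hk X,
      fcAmp_re m ε (by omega : 1 ≤ k + 1) (X-1), fcAmp_im m ε (by omega : 1 ≤ k + 1) (X+1),
      e1, e2]
  push_cast
  constructor
  · linear_combination ((SB m ε k X).im) * hkey
  · linear_combination (-(SA m ε k X).re) * hkey
end
end
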